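/- arXiv:2012.15142 — 8 statements merged into one kernel-verified Lean document; each statement's English description precedes it below -/
import Mathlib

section
/- Let F be a shifted family of k-element subsets of {1,...,n} with matching number at most s. Then at least one of the following holds: (i) every member of F intersects {1,...,s}; (ii) the clique number of F satisfies s+k ≤ ω(F) < sk+k-1; or (iii) F equals the family of all k-subsets of {1,...,sk+k-1}. -/
/-!
If some `A ∈ F` avoids `[s]`, then the `i`-th smallest element of `A` is at least `s + 1 + i`,
while that of any `k`-subset of `[s + k]` is at most `s + 1 + i`; by shiftedness `[s + k]` is
a clique. Shiftedness likewise moves any clique of size `m` down to `[m]`. If `[sk + k - 1]` is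
a clique, a member `C ∈ F` not contained in it meets it in at most `k - 1` points, leaving room
for `s` pairwise disjoint `k`-subsets of `[sk + k - 1] \ C`, which together with `C` form a
matching of size `s + 1`.
-/

open Finset

/-- Coordinatewise (shifting) partial order on finite sets of naturals:
`A ≼ B` iff the increasing enumerations satisfy `aₗ ≤ bₗ` for all `l`. -/
def shiftLE (A B : Finset ℕ) : Prop :=
  List.Forall₂ (· ≤ ·) (A.sort (· ≤ ·)) (B.sort (· ≤ ·))

/-- A family on the ground set `{1,…,n}` is shifted. -/
def IsShifted (n : ℕ) (F : Finset (Finset ℕ)) : Prop :=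
  ∀ B ∈ F, ∀ A ⊆ Finset.Icc 1 n, shiftLE A B → A ∈ F

/-- The matching number of `F` is at most `s`. -/
def MatchingLE (F : Finset (Finset ℕ)) (s : ℕ) : Prop :=
  ∀ M ⊆ F, (M : Set (Finset ℕ)).PairwiseDisjoint id → M.card ≤ s

/-- `F` contains `s` pairwise disjoint members. -/
def HasMatching (F : Finset (Finset ℕ)) (s : ℕ) : Prop :=
  ∃ M ⊆ F, (M : Set (Finset ℕ)).PairwiseDisjoint id ∧ M.card = s

/-- The clique number of `F` (as a `k`-graph on `{1,…,n}`) is at least `q`. -/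
def HasClique (n : ℕ) (F : Finset (Finset ℕ)) (k q : ℕ) : Prop :=
  ∃ Q ⊆ Finset.Icc 1 n, Q.card = q ∧ Q.powersetCard k ⊆ F

lemma Fin.add_sub_le_of_strictMono {k : ℕ} {f : Fin k → ℕ} (hf : StrictMono f) {i j : Fin k}
    (hij : i ≤ j) : f i + (j - i : ℕ) ≤ f j := by
  have hmaps : (Icc i j).image f ⊆ Icc (f i) (f j) := by
    intro x hx
    obtain ⟨l, hl, rfl⟩ := mem_image.1 hx
    obtain ⟨hil, hlj⟩ := mem_Icc.1 hl
    exact mem_Icc.2 ⟨hf.monotone hil, hf.monotone hlj⟩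
  have hcard := card_le_card hmaps
  rw [card_image_of_injective _ hf.injective, Fin.card_Icc, Nat.card_Icc] at hcard
  have := hf.monotone hij
  omega

namespace Finset

lemma add_le_orderEmbOfFin {A : Finset ℕ} {k a : ℕ} (hA : #A = k) (ha : ∀ x ∈ A, a ≤ x)
    (i : Fin k) : a + i ≤ A.orderEmbOfFin hA i := by
  have hk := i.pos
  have hi := Fin.add_sub_le_of_strictMono (A.orderEmbOfFin hA).strictMono
    (Fin.le_def.2 (Nat.zero_le i) : (⟨0, by omega⟩ : Fin k) ≤ i)
  have h0 := ha _ (A.orderEmbOfFin_mem hA ⟨0, by omega⟩)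
  simp only [Nat.sub_zero] at hi
  omega

lemma orderEmbOfFin_add_le {A : Finset ℕ} {k b : ℕ} (hA : #A = k) (hb : ∀ x ∈ A, x ≤ b)
    (i : Fin k) : A.orderEmbOfFin hA i + (k - 1 - i) ≤ b := by
  have hik := i.isLt
  have hi := Fin.add_sub_le_of_strictMono (A.orderEmbOfFin hA).strictMono
    (Fin.le_def.2 (Nat.le_sub_one_of_lt hik) : i ≤ ⟨k - 1, by omega⟩)
  have hlast := hb _ (A.orderEmbOfFin_mem hA ⟨k - 1, by omega⟩)
  dsimp only at hi
  omega

end Finset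

lemma shiftLE_of_forall_le {A B : Finset ℕ} {k : ℕ} (hA : #A = k) (hB : #B = k)
    (h : ∀ i, A.orderEmbOfFin hA i ≤ B.orderEmbOfFin hB i) : shiftLE A B := by
  rw [shiftLE, List.forall₂_iff_get]
  refine ⟨by simp [hA, hB], fun i hiA hiB => ?_⟩
  simpa [orderEmbOfFin_apply] using h ⟨i, by simpa [hA] using hiA⟩

lemma shiftLE_image_of_le {B : Finset ℕ} {k : ℕ} (hB : #B = k) {f : Fin k → ℕ}
    (hf : StrictMono f) (hle : ∀ i, B.orderEmbOfFin hB i ≤ f i) :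
    shiftLE B (univ.image f) := by
  have hcard : #(univ.image f) = k := by
    rw [card_image_of_injective _ hf.injective, card_univ, Fintype.card_fin]
  refine shiftLE_of_forall_le hB hcard fun i => ?_
  rw [← orderEmbOfFin_unique hcard (fun x => mem_image_of_mem f (mem_univ x)) hf]
  exact hle i

lemma Finset.pairwiseDisjoint_insert_and_card_insert {α : Type*} [DecidableEq α]
    {M : Finset (Finset α)} {T : Finset α} (hM : (M : Set (Finset α)).PairwiseDisjoint id)
    (hT : T.Nonempty) (hTM : ∀ T' ∈ M, Disjoint T T') :
    ((insert T M : Finset (Finset α)) : Set (Finset α)).PairwiseDisjoint id ∧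
      #(insert T M) = #M + 1 := by
  have hTnotM : T ∉ M := fun hTM' => hT.ne_empty (disjoint_self.1 (hTM T hTM'))
  refine ⟨?_, card_insert_of_notMem hTnotM⟩
  rw [coe_insert]
  exact hM.insert fun T' hT' _ => hTM T' hT'

lemma Finset.exists_pairwiseDisjoint_subset_powersetCard {α : Type*} [DecidableEq α] {k : ℕ}
    (hk : 0 < k) : ∀ (s : ℕ) (D : Finset α), s * k ≤ #D →
      ∃ M ⊆ D.powersetCard k, #M = s ∧ (M : Set (Finset α)).PairwiseDisjoint id
  | 0, _, _ => ⟨∅, empty_subset _, rfl, by simp⟩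
  | s + 1, D, hD => by
    rw [add_one_mul] at hD
    obtain ⟨T, hTD, hTk⟩ := exists_subset_card_eq (show k ≤ #D by omega)
    obtain ⟨M, hMD, hMs, hM⟩ := exists_pairwiseDisjoint_subset_powersetCard hk s (D \ T)
      (by rw [card_sdiff_of_subset hTD]; omega)
    obtain ⟨hM', hcard⟩ := pairwiseDisjoint_insert_and_card_insert hM (card_pos.1 (hTk ▸ hk))
      fun T' hT' => disjoint_of_subset_right (mem_powersetCard.1 (hMD hT')).1 disjoint_sdiff
    refine ⟨insert T M, insert_subset (mem_powersetCard.2 ⟨hTD, hTk⟩)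
      (hMD.trans (powersetCard_mono sdiff_subset)), by rw [hcard, hMs], hM'⟩

section Shifted

variable {n k : ℕ} {F : Finset (Finset ℕ)}

lemma powersetCard_Icc_subset_of_hasClique {m : ℕ} (hshift : IsShifted n F)
    (h : HasClique n F k m) : (Icc 1 m).powersetCard k ⊆ F := by
  obtain ⟨Q, hQn, hQm, hQF⟩ := h
  have hmn : m ≤ n := by simpa [hQm] using card_le_card hQn
  intro B hB
  obtain ⟨hBm, hBk⟩ := mem_powersetCard.1 hB
  have hBmem (i : Fin k) : 1 ≤ B.orderEmbOfFin hBk i ∧ B.orderEmbOfFin hBk i ≤ m :=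
    mem_Icc.1 (hBm (B.orderEmbOfFin_mem hBk i))
  -- the `j`-th smallest element of `B` is replaced by the `j`-th smallest element of `Q`
  let f : Fin k → ℕ := fun i =>
    Q.orderEmbOfFin hQm ⟨B.orderEmbOfFin hBk i - 1, by have := hBmem i; omega⟩
  have hf : StrictMono f := fun i j hij => (Q.orderEmbOfFin hQm).strictMono <| Fin.mk_lt_mk.2 <| by
    have := (B.orderEmbOfFin hBk).strictMono hij
    have := hBmem i
    omega
  have hle (i : Fin k) : B.orderEmbOfFin hBk i ≤ f i := by
    have hQ := add_le_orderEmbOfFin hQm (fun x hx => (mem_Icc.1 (hQn hx)).1)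
      ⟨B.orderEmbOfFin hBk i - 1, by have := hBmem i; omega⟩
    have := hBmem i
    dsimp only [f] at hQ ⊢
    omega
  have himage : univ.image f ∈ F := hQF <| mem_powersetCard.2
    ⟨image_subset_iff.2 fun i _ => orderEmbOfFin_mem _ _ _,
      by rw [card_image_of_injective _ hf.injective, card_univ, Fintype.card_fin]⟩
  exact hshift _ himage B (hBm.trans (Icc_subset_Icc_right hmn)) (shiftLE_image_of_le hBk hf hle)

lemma hasClique_add_of_mem {s : ℕ} {A : Finset ℕ} (hshift : IsShifted n F) (hA : A ∈ F)
    (hAn : A ⊆ Icc 1 n) (hAk : #A = k) (hk : 0 < k) (hAs : ∀ x ∈ A, s < x) :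
    HasClique n F k (s + k) := by
  have hsk : s + k ≤ n := by
    have := card_le_card fun x hx => mem_Ioc.2 ⟨hAs x hx, (mem_Icc.1 (hAn hx)).2⟩
    rw [Nat.card_Ioc, hAk] at this
    omega
  refine ⟨Icc 1 (s + k), Icc_subset_Icc_right hsk, by simp, fun B hB => ?_⟩
  obtain ⟨hBsk, hBk⟩ := mem_powersetCard.1 hB
  refine hshift A hA B (hBsk.trans (Icc_subset_Icc_right hsk))
    (shiftLE_of_forall_le hBk hAk fun i => ?_)
  have hBi := orderEmbOfFin_add_le hBk (fun x hx => (mem_Icc.1 (hBsk hx)).2) i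
  have hAi := add_le_orderEmbOfFin hAk (a := s + 1) hAs i
  have := i.isLt
  omega

lemma eq_powersetCard_of_hasClique {s : ℕ} (hF : F ⊆ (Icc 1 n).powersetCard k)
    (hshift : IsShifted n F) (hmatch : MatchingLE F s) (h : HasClique n F k (s * k + k - 1)) :
    F = (Icc 1 (s * k + k - 1)).powersetCard k := by
  set m := s * k + k - 1
  have hall := powersetCard_Icc_subset_of_hasClique hshift h
  refine Subset.antisymm (fun C hC => ?_) hall
  have hCk := (mem_powersetCard.1 (hF hC)).2
  refine mem_powersetCard.2 ⟨fun c hc => ?_, hCk⟩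
  by_contra hcm
  have hk : 0 < k := hCk ▸ card_pos.2 ⟨c, hc⟩
  -- `C` meets `[m]` in at most `k - 1` points, so `s` disjoint `k`-sets fit into `[m] \ C`
  have hD : s * k ≤ #(Icc 1 m \ C) := by
    have := card_le_card fun x (hx : x ∈ C ∩ Icc 1 m) =>
      mem_erase.2 ⟨fun hxc => hcm (by subst hxc; exact (mem_inter.1 hx).2), (mem_inter.1 hx).1⟩
    rw [card_erase_of_mem hc, hCk] at this
    rw [card_sdiff, Nat.card_Icc]
    omega
  obtain ⟨M, hMD, hMs, hM⟩ := exists_pairwiseDisjoint_subset_powersetCard hk s _ hD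
  obtain ⟨hM', hcard⟩ := pairwiseDisjoint_insert_and_card_insert hM ⟨c, hc⟩
    fun T hT => disjoint_of_subset_right (mem_powersetCard.1 (hMD hT)).1 disjoint_sdiff
  have := hmatch _ (insert_subset hC (hMD.trans ((powersetCard_mono sdiff_subset).trans hall))) hM'
  omega

end Shifted

theorem stmt_0 (n k s : ℕ) (F : Finset (Finset ℕ))
    (hF : F ⊆ (Finset.Icc 1 n).powersetCard k)
    (hshift : IsShifted n F) (hmatch : MatchingLE F s) :
    (∀ A ∈ F, (A ∩ Finset.Icc 1 s).Nonempty) ∨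
    (HasClique n F k (s + k) ∧ ¬ HasClique n F k (s * k + k - 1)) ∨
    F = (Finset.Icc 1 (s * k + k - 1)).powersetCard k := by
  by_cases hcover : ∀ A ∈ F, (A ∩ Icc 1 s).Nonempty
  · exact Or.inl hcover
  by_cases hbig : HasClique n F k (s * k + k - 1)
  · exact Or.inr (Or.inr (eq_powersetCard_of_hasClique hF hshift hmatch hbig))
  simp only [not_forall, not_nonempty_iff_eq_empty] at hcover
  obtain ⟨A, hA, hAs⟩ := hcover
  obtain ⟨hAn, hAk⟩ := mem_powersetCard.1 (hF hA)
  have hk : 0 < k := by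
    refine Nat.pos_of_ne_zero fun hk0 => hbig ⟨∅, empty_subset _, by simp [hk0], ?_⟩
    simpa [hk0, card_eq_zero.1 (hk0 ▸ hAk)] using hA
  have hAs' (x : ℕ) (hx : x ∈ A) : s < x := by
    by_contra! hxs
    exact notMem_empty x (hAs ▸ mem_inter.2 ⟨hx, mem_Icc.2 ⟨(mem_Icc.1 (hAn hx)).1, hxs⟩⟩)
  exact Or.inr (Or.inl ⟨hasClique_add_of_mem hshift hA hAn hAk hk hAs', hbig⟩)
end

section
/- If F is a shifted family of k-subsets of {1,...,n} with matching number at most s and clique number at least sk+k-1, then F is contained in the family of all k-subsets of {1,...,sk+k-1}, provided n ≥ (s+1)k. -/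
/-!
Shiftedness spreads the clique on `Q` to the clique on `{1, …, q}` with `q = #Q = sk + k - 1`:
the `k` largest elements of `Q` dominate, coordinatewise, every `k`-subset of `{1, …, q}`.
If some `B ∈ F` were not contained in `{1, …, q}`, then `{1, …, q} \ B` would have at least
`sk` elements, hence contain `s` pairwise disjoint `k`-sets of that clique, and together with `B`
they would form a matching of size `s + 1`.
-/

open Finset

namespace List.SortedLT

variable {l : List ℕ}

theorem getElem_add_sub_le (hl : l.SortedLT) {i j : ℕ} (hij : i ≤ j) (hj : j < l.length) :
    l[i] + (j - i) ≤ l[j] := by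
  induction j, hij using Nat.le_induction with
  | base => simp
  | succ j hij ih =>
    have hstep : l[j] < l[j + 1] := hl.getElem_lt_getElem_of_lt (Nat.lt_succ_self j)
    have hprev := ih (by omega)
    omega

end List.SortedLT

namespace Finset

theorem sort_getElem_add_card_le {A : Finset ℕ} {m : ℕ} (hA : ∀ a ∈ A, a ≤ m) {i : ℕ}
    (hi : i < (A.sort).length) : (A.sort)[i] + #A ≤ m + i + 1 := by
  have hlen : (A.sort).length = #A := length_sort _
  have hgap := A.sortedLT_sort.getElem_add_sub_le (i := i) (j := #A - 1) (by omega) (by omega)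
  have hlast := hA _ ((mem_sort _).1 (List.getElem_mem (l := A.sort) (n := #A - 1) (by omega)))
  omega

theorem add_one_le_sort_getElem {Q : Finset ℕ} (hQ : 0 ∉ Q) {i : ℕ}
    (hi : i < (Q.sort).length) : i + 1 ≤ (Q.sort)[i] := by
  have hgap := Q.sortedLT_sort.getElem_add_sub_le (Nat.zero_le i) hi
  have hfirst : (Q.sort)[0] ≠ 0 := fun h =>
    hQ (h ▸ (mem_sort _).1 (List.getElem_mem (l := Q.sort) (n := 0) (by omega)))
  omega

theorem exists_pairwiseDisjoint_subset_powersetCard_s1 {α : Type*} [DecidableEq α] {k : ℕ}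
    (hk : 0 < k) (s : ℕ) {T : Finset α} (hT : s * k ≤ #T) :
    ∃ M ⊆ T.powersetCard k, #M = s ∧ (M : Set (Finset α)).PairwiseDisjoint id := by
  induction s generalizing T with
  | zero => exact ⟨∅, empty_subset _, rfl, by simp⟩
  | succ s ih =>
    obtain ⟨A, hAT, hAcard⟩ := exists_subset_card_eq (show k ≤ #T by nlinarith)
    obtain ⟨M, hMT, hMcard, hMdisj⟩ := ih (T := T \ A) (by
      rw [card_sdiff_of_subset hAT, hAcard, Nat.le_sub_iff_add_le (by nlinarith)]; nlinarith)
    have hdisj : ∀ B ∈ M, Disjoint A B := fun B hB =>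
      disjoint_sdiff.mono_right (mem_powersetCard.1 (hMT hB)).1
    have hAM : A ∉ M := fun hA => by
      rw [disjoint_self.1 (hdisj A hA), bot_eq_empty, card_empty] at hAcard
      omega
    refine ⟨insert A M, insert_subset (mem_powersetCard.2 ⟨hAT, hAcard⟩)
      (hMT.trans (powersetCard_mono sdiff_subset)), by rw [card_insert_of_notMem hAM, hMcard], ?_⟩
    rw [coe_insert]
    exact hMdisj.insert fun B hB _ => hdisj B hB

theorem IsShifted.powersetCard_Icc_card_subset {n k : ℕ} {F : Finset (Finset ℕ)} {Q : Finset ℕ}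
    (hshift : IsShifted n F) (hQ : Q ⊆ Icc 1 n) (hQF : Q.powersetCard k ⊆ F) :
    (Icc 1 #Q).powersetCard k ⊆ F := by
  intro A hA
  obtain ⟨hAsub, hAcard⟩ := mem_powersetCard.1 hA
  have hQ0 : 0 ∉ Q := fun h => by simpa using hQ h
  have hkQ : k ≤ #Q := hAcard ▸ (card_le_card hAsub).trans (by simp)
  have hQn : #Q ≤ n := (card_le_card hQ).trans (by simp)
  set b := (Q.sort).drop (#Q - k)
  have hb_sorted : b.SortedLT := (Q.sortedLT_sort.pairwise.sublist (List.drop_sublist _ _)).sortedLT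
  have hb_len : b.length = k := by simp only [b, List.length_drop, length_sort]; omega
  have hbF : b.toFinset ∈ F := by
    refine hQF (mem_powersetCard.2 ⟨fun x hx => ?_, ?_⟩)
    · exact (mem_sort _).1 (List.mem_of_mem_drop (List.mem_toFinset.1 hx))
    · rw [List.toFinset_card_of_nodup hb_sorted.nodup, hb_len]
  refine hshift _ hbF A (hAsub.trans (Icc_subset_Icc_right hQn)) ?_
  rw [shiftLE, (List.toFinset_sort _ hb_sorted.nodup).2 hb_sorted.sortedLE.pairwise]
  refine List.forall₂_iff_get.2 ⟨by simp [hAcard, hb_len], fun i hiA hib => ?_⟩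
  have ha := sort_getElem_add_card_le (fun a ha => (mem_Icc.1 (hAsub ha)).2) hiA
  have hb := add_one_le_sort_getElem hQ0 (i := #Q - k + i) (by simp only [length_sort]; omega)
  simp only [List.get_eq_getElem, b, List.getElem_drop]
  omega

end Finset

theorem stmt_1_general (n k s : ℕ) (F : Finset (Finset ℕ))
    (hF : F ⊆ (Finset.Icc 1 n).powersetCard k)
    (hshift : IsShifted n F) (hmatch : MatchingLE F s)
    (hclique : HasClique n F k (s * k + k - 1)) :
    F ⊆ (Finset.Icc 1 (s * k + k - 1)).powersetCard k := by
  obtain ⟨Q, hQ, hQcard, hQF⟩ := hclique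
  have hcl := hshift.powersetCard_Icc_card_subset hQ hQF
  rw [hQcard] at hcl
  intro B hB
  have hBcard := (mem_powersetCard.1 (hF hB)).2
  refine mem_powersetCard.2 ⟨?_, hBcard⟩
  by_contra hBq
  obtain ⟨x, hxB, -⟩ := not_subset.1 hBq
  have hT : s * k ≤ #(Icc 1 (s * k + k - 1) \ B) := by
    have hBout : #(B ∩ Icc 1 (s * k + k - 1)) < #B :=
      card_lt_card ⟨inter_subset_left, fun h => hBq (h.trans inter_subset_right)⟩
    rw [card_sdiff, Nat.card_Icc]
    omega
  have hk : 0 < k := hBcard ▸ card_pos.2 ⟨x, hxB⟩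
  obtain ⟨M, hMT, hMcard, hMdisj⟩ := exists_pairwiseDisjoint_subset_powersetCard_s1 hk s hT
  have hdisj : ∀ A ∈ M, Disjoint B A := fun A hA =>
    disjoint_sdiff.mono_right (mem_powersetCard.1 (hMT hA)).1
  have hBM : B ∉ M := fun h => by simp [disjoint_self.1 (hdisj B h)] at hxB
  have hmatching := hmatch (insert B M)
    (insert_subset hB (hMT.trans ((powersetCard_mono sdiff_subset).trans hcl)))
    (by rw [coe_insert]; exact hMdisj.insert fun A hA _ => hdisj A hA)
  rw [card_insert_of_notMem hBM, hMcard] at hmatching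
  omega

theorem stmt_1 (n k s : ℕ) (hn : (s + 1) * k ≤ n) (F : Finset (Finset ℕ))
    (hF : F ⊆ (Finset.Icc 1 n).powersetCard k)
    (hshift : IsShifted n F) (hmatch : MatchingLE F s)
    (hclique : HasClique n F k (s * k + k - 1)) :
    F ⊆ (Finset.Icc 1 (s * k + k - 1)).powersetCard k :=
  stmt_1_general n k s F hF hshift hmatch hclique
end

section
/- Let σ be a cyclic permutation of an m-element set and let C(σ,l) denote the family of the m intervals (arcs) of length l along σ. If B ⊆ C(σ,b) and D ⊆ C(σ,d) are cross-intersecting (every B ∈ B meets every D ∈ D) and b+d ≤ m, then |B| + |D| ≤ m; moreover if both B and D are nonempty then |B| + |D| ≤ b + d. -/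
/-!
Index the arcs by their starting points in `ZMod m`. An arc of length `b` starting at `z` meets an
arc of length `d` starting at `w` exactly when `(d - 1) - z + w` lies in `{0, …, b + d - 2}`, so
for the sets `S`, `T` of starting points the sumset `((d - 1) - S) + T` avoids the `m - c`
residues `c, …, m - 1`, where `c = b + d - 1`. Adding an interval `I` of length `k ≥ 1` to a
nonempty set `C` gives at least `min m (k + #C - 1)` residues, since otherwise `I + C` would be
closed under `+ 1`. Applied to `I = {c, …, m - 1}` and `C = S - (d - 1)`, the sumset `I + C`
misses `T`, which forces `#S + #T ≤ c + 1 = b + d`. The bound `m` follows from this when both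
families are nonempty, and trivially otherwise.
-/

open Finset

/-- The arc of length `l` starting at position `i` along the cyclic permutation
`(x 0, x 1, …, x (m-1))`. -/
def arc {α : Type*} [DecidableEq α] (x : ℕ → α) (m l i : ℕ) : Finset α :=
  (Finset.range l).image (fun j => x ((i + j) % m))

/-- The family `C(σ, l)` of the `m` arcs of length `l` along the cyclic permutation. -/
def arcs {α : Type*} [DecidableEq α] (x : ℕ → α) (m l : ℕ) : Finset (Finset α) :=
  (Finset.range m).image (fun i => arc x m l i)

open Pointwise

namespace ZMod

variable {m : ℕ}

def cyclicInterval (s : ZMod m) (k : ℕ) : Finset (ZMod m) :=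
  (range k).image fun j : ℕ => s + (j : ZMod m)

theorem mem_cyclicInterval {s z : ZMod m} {k : ℕ} :
    z ∈ cyclicInterval s k ↔ ∃ j < k, s + j = z := by
  simp [cyclicInterval]

theorem cyclicInterval_subset_succ (s : ZMod m) (k : ℕ) :
    cyclicInterval s k ⊆ cyclicInterval s (k + 1) :=
  image_subset_image (range_subset_range.mpr k.le_succ)

theorem add_one_mem_cyclicInterval_succ {s z : ZMod m} {k : ℕ} (hz : z ∈ cyclicInterval s k) :
    z + 1 ∈ cyclicInterval s (k + 1) := by
  obtain ⟨j, hj, rfl⟩ := mem_cyclicInterval.mp hz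
  exact mem_cyclicInterval.mpr ⟨j + 1, by omega, by push_cast; ring⟩

theorem cyclicInterval_injective {l : ℕ} (hl : 1 ≤ l) (hlm : l < m) :
    Function.Injective fun s : ZMod m => cyclicInterval s l := by
  intro s s' (h : cyclicInterval s l = cyclicInterval s' l)
  have hs : s ∈ cyclicInterval s' l := h ▸ mem_cyclicInterval.mpr ⟨0, hl, by simp⟩
  obtain ⟨j, hj, rfl⟩ := mem_cyclicInterval.mp hs
  rcases j with _ | j
  · simp
  -- The predecessor `s' + j` of `s` lies in `cyclicInterval s' l = cyclicInterval s l`, so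
  -- `s - 1 = s + t` with `t < l < m`.
  have hpred : s' + j ∈ cyclicInterval (s' + ((j + 1 : ℕ) : ZMod m)) l :=
    h ▸ mem_cyclicInterval.mpr ⟨j, by omega, rfl⟩
  obtain ⟨t, ht, hst⟩ := mem_cyclicInterval.mp hpred
  have hdvd : m ∣ t + 1 := by
    rw [← natCast_eq_zero_iff]
    push_cast at hst ⊢
    linear_combination hst
  have := Nat.le_of_dvd (by omega) hdvd
  omega

theorem eq_univ_of_add_one_mem [NeZero m] {X : Finset (ZMod m)} (hX : X.Nonempty)
    (h : ∀ x ∈ X, x + 1 ∈ X) : X = univ := by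
  obtain ⟨x₀, hx₀⟩ := hX
  have hshift : ∀ n : ℕ, x₀ + n ∈ X := by
    intro n
    induction n with
    | zero => simpa using hx₀
    | succ n ih => simpa [add_assoc] using h _ ih
  refine eq_univ_of_forall fun v => ?_
  simpa using hshift (v - x₀).val

theorem card_add_le_card_cyclicInterval_add [NeZero m] (s : ZMod m) {C : Finset (ZMod m)}
    (hC : C.Nonempty) (k : ℕ) (hne : cyclicInterval s (k + 1) + C ≠ univ) :
    #C + k ≤ #(cyclicInterval s (k + 1) + C) := by
  induction k with
  | zero =>
    simpa using card_le_card_add_left (s := cyclicInterval s 1) ⟨s, by simp [cyclicInterval]⟩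
  | succ k ih =>
    have hsub : cyclicInterval s (k + 1) + C ⊆ cyclicInterval s (k + 1 + 1) + C :=
      add_subset_add_right (cyclicInterval_subset_succ s _)
    have hle := ih fun huniv => hne (univ_subset_iff.mp (huniv ▸ hsub))
    have hnonempty : (cyclicInterval s (k + 1) + C).Nonempty :=
      add_nonempty.mpr ⟨⟨s, mem_cyclicInterval.mpr ⟨0, by omega, by simp⟩⟩, hC⟩
    obtain ⟨z, hz, hz1⟩ :
        ∃ z ∈ cyclicInterval s (k + 1) + C, z + 1 ∉ cyclicInterval s (k + 1) + C := by
      by_contra! hclosed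
      exact hne (univ_subset_iff.mp (eq_univ_of_add_one_mem hnonempty hclosed ▸ hsub))
    obtain ⟨u, hu, γ, hγ, rfl⟩ := mem_add.mp hz
    have hnew : u + γ + 1 ∈ cyclicInterval s (k + 1 + 1) + C :=
      add_right_comm u γ 1 ▸ add_mem_add (add_one_mem_cyclicInterval_succ hu) hγ
    have hlt := card_lt_card ((ssubset_iff_of_subset hsub).mpr ⟨_, hnew, hz1⟩)
    omega

theorem card_add_card_le_of_val_add_lt [NeZero m] {c : ℕ} (hc : c < m) {A T : Finset (ZMod m)}
    (hA : A.Nonempty) (hT : T.Nonempty) (h : ∀ a ∈ A, ∀ z ∈ T, (a + z).val < c) :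
    #A + #T ≤ c + 1 := by
  have hdisj : Disjoint (cyclicInterval (c : ZMod m) (m - c - 1 + 1) + -A) T := by
    refine disjoint_left.mpr fun z hzK hzT => ?_
    obtain ⟨u, hu, _, hv, rfl⟩ := mem_add.mp hzK
    obtain ⟨a, ha, rfl⟩ := mem_neg.mp hv
    obtain ⟨j, hj, rfl⟩ := mem_cyclicInterval.mp hu
    have hval := h a ha _ hzT
    rw [show a + ((c : ZMod m) + j + -a) = ((c + j : ℕ) : ZMod m) by push_cast; ring,
      val_natCast, Nat.mod_eq_of_lt (by omega)] at hval
    omega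
  obtain ⟨z, hz⟩ := hT
  have hgrow := card_add_le_card_cyclicInterval_add (c : ZMod m) hA.neg (m - c - 1)
    fun huniv => disjoint_left.mp hdisj (huniv ▸ mem_univ z) hz
  have hfit := (card_union_of_disjoint hdisj).symm.trans_le (card_le_univ _)
  rw [ZMod.card, card_neg] at *
  omega

theorem card_add_card_le_of_cyclicInterval_inter_nonempty [NeZero m] {b d : ℕ}
    (hbd : b + d ≤ m) {S T : Finset (ZMod m)} (hS : S.Nonempty) (hT : T.Nonempty)
    (h : ∀ z ∈ S, ∀ w ∈ T, (cyclicInterval z b ∩ cyclicInterval w d).Nonempty) :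
    #S + #T ≤ b + d := by
  have hreflect : ∀ z ∈ S, ∀ w ∈ T, ((d - 1 : ℕ) - z + w).val < b + d - 1 := by
    intro z hz w hw
    obtain ⟨y, hy⟩ := h z hz w hw
    obtain ⟨⟨p, hp, rfl⟩, ⟨q, hq, hpq⟩⟩ := And.imp mem_cyclicInterval.mp mem_cyclicInterval.mp
      (mem_inter.mp hy)
    have hsum : ((d - 1 : ℕ) : ZMod m) - z + w = ((d - 1 - q + p : ℕ) : ZMod m) := by
      rw [Nat.cast_add, Nat.cast_sub (show q ≤ d - 1 by omega)]
      linear_combination hpq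
    rw [hsum, val_natCast, Nat.mod_eq_of_lt (by omega)]
    omega
  have hb : 1 ≤ b := by
    obtain ⟨z, hz⟩ := hS
    obtain ⟨w, hw⟩ := hT
    obtain ⟨y, hy⟩ := h z hz w hw
    obtain ⟨p, hp, -⟩ := mem_cyclicInterval.mp (mem_inter.mp hy).1
    omega
  have := card_add_card_le_of_val_add_lt (c := b + d - 1) (by omega) (hS.image _) hT
    (forall_mem_image.mpr hreflect)
  rw [card_image_of_injective _ sub_right_injective] at this
  omega

theorem image_cyclicInterval_injective {β : Type*} [DecidableEq β] {y : ZMod m → β}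
    (hy : Function.Injective y) {l : ℕ} (hl : 1 ≤ l) (hlm : l < m) :
    Function.Injective fun s : ZMod m => (cyclicInterval s l).image y :=
  (image_injective hy).comp (cyclicInterval_injective hl hlm)

end ZMod

open ZMod

theorem arc_eq_image_cyclicInterval {α : Type*} [DecidableEq α] (x : ℕ → α) {m : ℕ}
    [NeZero m] (l i : ℕ) :
    arc x m l i = (cyclicInterval (i : ZMod m) l).image fun z => x z.val := by
  simp only [arc, cyclicInterval, image_image]
  congr 1
  funext j
  simp [← Nat.cast_add, val_natCast]

theorem arcs_subset_range {α : Type*} [DecidableEq α] (x : ℕ → α) {m : ℕ} [NeZero m] (l : ℕ) :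
    ↑(arcs x m l) ⊆
      Set.range fun s : ZMod m => (cyclicInterval s l).image fun z => x z.val := by
  intro E hE
  obtain ⟨i, -, rfl⟩ := mem_image.mp hE
  exact ⟨i, (arc_eq_image_cyclicInterval x l i).symm⟩

theorem card_le_of_subset_arcs {α : Type*} [DecidableEq α] {x : ℕ → α} {m l : ℕ}
    {B : Finset (Finset α)} (hB : B ⊆ arcs x m l) : #B ≤ m :=
  (card_le_card hB).trans (card_image_le.trans (card_range m).le)

theorem card_preimage_of_subset_range {ι β : Type*} {f : ι → β} (hf : Function.Injective f)
    {B : Finset β} (hB : ↑B ⊆ Set.range f) : #(B.preimage f hf.injOn) = #B := by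
  classical
  rw [card_preimage, filter_true_of_mem fun E hE => hB hE]

theorem stmt_2_general {α : Type*} [DecidableEq α] (m b d : ℕ) (x : ℕ → α)
    (hinj : ∀ i < m, ∀ j < m, x i = x j → i = j)
    (hb1 : 1 ≤ b) (hd1 : 1 ≤ d)
    (B D : Finset (Finset α))
    (hB : B ⊆ arcs x m b) (hD : D ⊆ arcs x m d)
    (hcross : ∀ A ∈ B, ∀ C ∈ D, (A ∩ C).Nonempty)
    (hbd : b + d ≤ m) :
    B.card + D.card ≤ m ∧
      (B.Nonempty → D.Nonempty → B.card + D.card ≤ b + d) := by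
  have : NeZero m := ⟨by omega⟩
  have hy : Function.Injective fun z : ZMod m => x z.val := fun z w h =>
    val_injective m (hinj _ (val_lt z) _ (val_lt w) h)
  have hcardB := card_preimage_of_subset_range (image_cyclicInterval_injective hy hb1 (by omega))
    ((coe_subset.mpr hB).trans (arcs_subset_range x b))
  have hcardD := card_preimage_of_subset_range (image_cyclicInterval_injective hy hd1 (by omega))
    ((coe_subset.mpr hD).trans (arcs_subset_range x d))
  have hbound : B.Nonempty → D.Nonempty → #B + #D ≤ b + d := by
    intro hBne hDne
    rw [← hcardB, ← hcardD]
    refine card_add_card_le_of_cyclicInterval_inter_nonempty hbd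
      (card_pos.mp (hcardB ▸ hBne.card_pos)) (card_pos.mp (hcardD ▸ hDne.card_pos)) ?_
    intro z hz w hw
    have := hcross _ (mem_preimage.mp hz) _ (mem_preimage.mp hw)
    rwa [← image_inter _ _ hy, image_nonempty] at this
  refine ⟨?_, hbound⟩
  rcases B.eq_empty_or_nonempty with rfl | hBne
  · simpa using card_le_of_subset_arcs hD
  rcases D.eq_empty_or_nonempty with rfl | hDne
  · simpa using card_le_of_subset_arcs hB
  exact (hbound hBne hDne).trans hbd

theorem stmt_2 {α : Type*} [DecidableEq α] (m b d : ℕ) (x : ℕ → α)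
    (hinj : ∀ i < m, ∀ j < m, x i = x j → i = j)
    (hb1 : 1 ≤ b) (hbm : b < m) (hd1 : 1 ≤ d) (hdm : d < m)
    (B D : Finset (Finset α))
    (hB : B ⊆ arcs x m b) (hD : D ⊆ arcs x m d)
    (hcross : ∀ A ∈ B, ∀ C ∈ D, (A ∩ C).Nonempty)
    (hbd : b + d ≤ m) :
    B.card + D.card ≤ m ∧
      (B.Nonempty → D.Nonempty → B.card + D.card ≤ b + d) :=
  stmt_2_general m b d x hinj hb1 hd1 B D hB hD hcross hbd
end

section
/- Let F be a family of k-subsets of X = X_1 ∪ X_2 (disjoint, |X_1| = n_1, |X_2| = n_2) such that every F ∈ F satisfies |F ∩ X_1| = l and |F ∩ X_2| = k - l. If n_1 ≥ 2l, n_2 ≥ 2(k-l) and F is intersecting, then |F| ≤ max{ C(n_1-1, l-1)·C(n_2, k-l), C(n_1, l)·C(n_2-1, k-l-1) }. -/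
/-!
Katona's cycle method on two cycles at once. Enumerate `X₁` and `X₂` as `ℤ/n₁` and `ℤ/n₂`; for
fixed enumerations, the members of `F` whose traces on `X₁` and `X₂` are arcs (of lengths `l` and
`r = k - l`) give a set `P` of pairs of start points, any two of which have meeting arcs in some
coordinate. Sort `P` into rows indexed by the first coordinate. Either all nonempty rows lie in a
window of `2l` consecutive points, and rows at distance `l` there hold at most `n₂` points
together, so `|P| ≤ l n₂`; or every row has a nonempty row whose arc misses its own, and then
two rows `s`, `s + l` are cross-intersecting arc families on `ℤ/n₂` holding at most `2r` points
together, so `|P| ≤ r n₁`. Averaging over all permutations of the two cycles, under which every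
member of `F` is counted equally often, turns `|P| ≤ max (l n₂) (r n₁)` into the bound.
-/

open Finset Pointwise
open scoped Nat

namespace TwoPartIntersecting

section Arc

variable {N : ℕ}

def arc (i : ZMod N) (c : ℕ) : Finset (ZMod N) := (range c).image fun j : ℕ => i + j

lemma mem_arc {i x : ZMod N} {c : ℕ} : x ∈ arc i c ↔ ∃ j < c, i + j = x := by
  simp [arc]

lemma natCast_inj_of_lt {a b : ℕ} (ha : a < N) (hb : b < N) (h : (a : ZMod N) = b) : a = b := by
  rwa [ZMod.natCast_eq_natCast_iff', Nat.mod_eq_of_lt ha, Nat.mod_eq_of_lt hb] at h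

lemma add_natCast_injOn (i : ZMod N) : Set.InjOn (fun j : ℕ => i + j) (range N) := by
  intro a ha b hb h
  exact natCast_inj_of_lt (mem_range.1 ha) (mem_range.1 hb) (add_left_cancel h)

lemma card_arc {c : ℕ} (hc : c ≤ N) (i : ZMod N) : #(arc i c) = c := by
  rw [arc, card_image_of_injOn ((add_natCast_injOn i).mono ?_), card_range]
  intro j hj
  simp only [coe_range, Set.mem_Iio] at hj ⊢
  omega

lemma disjoint_arc_add_natCast {c d : ℕ} (hcd : c ≤ d) (hdN : d + c ≤ N) (i : ZMod N) :
    Disjoint (arc i c) (arc (i + d) c) := by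
  rw [disjoint_left]
  rintro _ hx hx'
  obtain ⟨a, ha, rfl⟩ := mem_arc.1 hx
  obtain ⟨b, hb, hab⟩ := mem_arc.1 hx'
  have : d + b = a := natCast_inj_of_lt (N := N) (by omega) (by omega) <| by
    push_cast
    exact add_left_cancel (a := i) (by rw [← hab, add_assoc])
  omega

lemma arc_injective {c : ℕ} (hc : 0 < c) (hcN : c < N) :
    Function.Injective (arc (N := N) · c) := by
  have start_not_mem : ∀ i : ZMod N, i - 1 ∉ arc i c := by
    rintro i hi
    obtain ⟨j, hj, hji⟩ := mem_arc.1 hi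
    have : ((j + 1 : ℕ) : ZMod N) = 0 := by
      push_cast
      linear_combination hji
    rw [ZMod.natCast_eq_zero_iff] at this
    have := Nat.le_of_dvd (by omega) this
    omega
  intro i i' (h : arc i c = arc i' c)
  obtain ⟨j, hj, rfl⟩ := mem_arc.1 (h ▸ mem_arc.2 ⟨0, hc, by simp⟩ : i ∈ arc i' c)
  obtain _ | j := j
  · simp
  · refine absurd ?_ (start_not_mem (i' + (j + 1 : ℕ)))
    rw [h]
    exact mem_arc.2 ⟨j, by omega, by push_cast; ring⟩

lemma mem_arc_of_inter_nonempty {c : ℕ} {i j : ZMod N} (h : (arc i c ∩ arc j c).Nonempty) :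
    j ∈ arc (i - ((c - 1 : ℕ) : ZMod N)) (2 * c - 1) := by
  obtain ⟨x, hx⟩ := h
  obtain ⟨a, ha, rfl⟩ := mem_arc.1 (mem_inter.1 hx).1
  obtain ⟨b, hb, hab⟩ := mem_arc.1 (mem_inter.1 hx).2
  obtain ⟨c, rfl⟩ : ∃ c', c = c' + 1 := ⟨c - 1, by omega⟩
  refine mem_arc.2 ⟨a + c - b, by omega, ?_⟩
  rw [Nat.add_sub_cancel, Nat.cast_sub (by omega)]
  push_cast
  linear_combination -hab

lemma eq_univ_of_forall_add_one_mem [NeZero N] {T : Finset (ZMod N)} (hT : T.Nonempty)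
    (h : ∀ x ∈ T, x + 1 ∈ T) : T = univ := by
  obtain ⟨x, hx⟩ := hT
  have add_mem : ∀ k : ℕ, x + k ∈ T := by
    intro k
    induction k with
    | zero => simpa using hx
    | succ k ih => simpa [add_assoc] using h _ ih
  refine eq_univ_of_forall fun y => ?_
  simpa using add_mem (y - x).val

lemma min_le_card_add_zero_one [NeZero N] {T : Finset (ZMod N)} (hT : T.Nonempty) :
    min N (#T + 1) ≤ #(T + {0, 1}) := by
  have hsub : T ⊆ T + {0, 1} := subset_add_left T (by simp)
  by_cases hself : T + {0, 1} = T
  · have : T = univ := eq_univ_of_forall_add_one_mem hT fun x hx =>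
      hself ▸ mem_add.2 ⟨x, hx, 1, by simp, rfl⟩
    rw [hself, this, card_univ, ZMod.card]
    exact min_le_left _ _
  · exact (min_le_right _ _).trans (card_lt_card (ssubset_of_subset_of_ne hsub (Ne.symm hself)))

lemma arc_add_zero_one (i : ZMod N) (c : ℕ) : arc i (c + 1) + {0, 1} = arc i (c + 2) := by
  ext x
  simp only [mem_add, mem_arc, mem_insert, mem_singleton]
  constructor
  · rintro ⟨_, ⟨j, hj, rfl⟩, _, rfl | rfl, rfl⟩
    · exact ⟨j, by omega, by simp⟩
    · exact ⟨j + 1, by omega, by push_cast; ring⟩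
  · rintro ⟨j, hj, rfl⟩
    obtain hj | rfl : j < c + 1 ∨ j = c + 1 := by omega
    · exact ⟨_, ⟨j, hj, rfl⟩, 0, by simp, by simp⟩
    · exact ⟨_, ⟨c, by omega, rfl⟩, 1, by simp, by push_cast; ring⟩

lemma min_le_card_add_arc [NeZero N] {B : Finset (ZMod N)} (hB : B.Nonempty) (i : ZMod N)
    (g : ℕ) : min N (#B + g) ≤ #(B + arc i (g + 1)) := by
  induction g with
  | zero =>
    have : arc i 1 = {i} := by ext; simp [mem_arc, eq_comm]
    rw [this, card_add_singleton]
    exact min_le_right _ _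
  | succ g ih =>
    rw [← arc_add_zero_one, ← add_assoc B]
    have harc : (arc i (g + 1)).Nonempty := ⟨i, mem_arc.2 ⟨0, by omega, by simp⟩⟩
    have := min_le_card_add_zero_one (hB.add harc)
    omega

theorem card_add_card_le_two_mul_of_forall_inter_nonempty [NeZero N] {c : ℕ}
    (hN : 2 * c ≤ N) {A B : Finset (ZMod N)} (hA : A.Nonempty) (hB : B.Nonempty)
    (h : ∀ a ∈ A, ∀ b ∈ B, (arc a c ∩ arc b c).Nonempty) : #A + #B ≤ 2 * c := by
  -- `A` avoids `B + {c, …, N - c}`, a set of size at least `min N (#B + N - 2c)`.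
  have hdisj : Disjoint A (B + arc (c : ZMod N) (N - 2 * c + 1)) := by
    rw [disjoint_left]
    rintro a ha haC
    obtain ⟨b, hb, _, hw, rfl⟩ := mem_add.1 haC
    obtain ⟨w, hw, rfl⟩ := mem_arc.1 hw
    have hfar := disjoint_arc_add_natCast (d := c + w) le_self_add (by omega) b
    push_cast at hfar
    exact not_disjoint_iff_nonempty_inter.2 (h _ ha b hb) hfar.symm
  have hC := min_le_card_add_arc hB (c : ZMod N) (N - 2 * c)
  have hAC := card_union_of_disjoint hdisj ▸ card_le_univ (A ∪ _)
  rw [ZMod.card] at hAC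
  have := hA.card_pos
  omega

theorem card_add_card_le_of_forall_inter_nonempty [NeZero N] {c : ℕ} (hN : 2 * c ≤ N)
    {A B : Finset (ZMod N)} (h : ∀ a ∈ A, ∀ b ∈ B, (arc a c ∩ arc b c).Nonempty) :
    #A + #B ≤ N := by
  obtain rfl | hA := A.eq_empty_or_nonempty
  · simpa using card_le_univ B
  obtain rfl | hB := B.eq_empty_or_nonempty
  · simpa using card_le_univ A
  exact (card_add_card_le_two_mul_of_forall_inter_nonempty hN hA hB h).trans hN

end Arc

lemma sum_le_mul_card_of_forall_add_le {G : Type*} [AddGroup G] [Fintype G] (f : G → ℕ) (d : G)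
    {K : ℕ} (h : ∀ s, f s + f (s + d) ≤ 2 * K) : ∑ s, f s ≤ K * Fintype.card G := by
  have hshift : ∑ s, f (s + d) = ∑ s, f s := Equiv.sum_comp (Equiv.addRight d) f
  have : 2 * ∑ s, f s ≤ 2 * (K * Fintype.card G) := calc
    2 * ∑ s, f s = ∑ s, (f s + f (s + d)) := by rw [sum_add_distrib, hshift, two_mul]
    _ ≤ ∑ _s : G, 2 * K := sum_le_sum fun s _ => h s
    _ = 2 * (K * Fintype.card G) := by rw [sum_const, card_univ, smul_eq_mul]; ring
  omega

section Circle

variable {m n l r : ℕ} [NeZero m] [NeZero n]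

lemma sum_card_le_mul_of_rows_meet_arc (hm : 2 * l ≤ m) (hn : 2 * r ≤ n)
    (f : ZMod m → Finset (ZMod n))
    (hf : ∀ s s', Disjoint (arc s l) (arc s' l) →
      ∀ t ∈ f s, ∀ t' ∈ f s', (arc t r ∩ arc t' r).Nonempty)
    (s₀ : ZMod m) (hs₀ : ∀ s, (f s).Nonempty → (arc s₀ l ∩ arc s l).Nonempty) :
    ∑ s, #(f s) ≤ l * n := by
  -- Every nonempty row lies in the window `w, …, w + 2l - 1`; pair `w + j` with `w + j + l`.
  set w := s₀ - ((l - 1 : ℕ) : ZMod m)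
  have hsupp : ∀ s ∉ arc w (2 * l), #(f s) = 0 := by
    intro s hs
    by_contra hne
    obtain ⟨j, hj, rfl⟩ := mem_arc.1 (mem_arc_of_inter_nonempty (hs₀ s (card_pos.1 (by omega))))
    exact hs (mem_arc.2 ⟨j, by omega, rfl⟩)
  calc ∑ s, #(f s) = ∑ s ∈ arc w (2 * l), #(f s) :=
        (sum_subset (subset_univ _) fun s _ hs => hsupp s hs).symm
    _ = ∑ j ∈ range (2 * l), #(f (w + j)) :=
        sum_image ((add_natCast_injOn w).mono (by simpa using hm))
    _ = ∑ j ∈ range l, (#(f (w + j)) + #(f (w + j + l))) := by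
        rw [two_mul, sum_range_add, ← sum_add_distrib]
        refine sum_congr rfl fun j _ => ?_
        push_cast
        ring_nf
    _ ≤ ∑ _j ∈ range l, n := sum_le_sum fun j _ =>
        card_add_card_le_of_forall_inter_nonempty hn
          (hf _ _ (disjoint_arc_add_natCast le_rfl (by omega) _))
    _ = l * n := by simp

lemma sum_card_le_mul_of_exists_disjoint_row (hm : 2 * l ≤ m) (hn : 2 * r ≤ n)
    (f : ZMod m → Finset (ZMod n))
    (hf : ∀ s s', Disjoint (arc s l) (arc s' l) →
      ∀ t ∈ f s, ∀ t' ∈ f s', (arc t r ∩ arc t' r).Nonempty)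
    (hpartner : ∀ s, ∃ s', Disjoint (arc s l) (arc s' l) ∧ (f s').Nonempty) :
    ∑ s, #(f s) ≤ r * m := by
  have hbound : ∀ s, #(f s) ≤ 2 * r := by
    intro s
    obtain h | h := (f s).eq_empty_or_nonempty
    · simp [h]
    obtain ⟨s', hss', hs'⟩ := hpartner s
    have := card_add_card_le_two_mul_of_forall_inter_nonempty hn h hs' (hf s s' hss')
    omega
  have hpair : ∀ s, #(f s) + #(f (s + l)) ≤ 2 * r := by
    intro s
    obtain h | h := (f s).eq_empty_or_nonempty
    · simpa [h] using hbound _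
    obtain h' | h' := (f (s + l)).eq_empty_or_nonempty
    · simpa [h'] using hbound s
    exact card_add_card_le_two_mul_of_forall_inter_nonempty hn h h'
      (hf _ _ (disjoint_arc_add_natCast le_rfl (by omega) s))
  simpa using sum_le_mul_card_of_forall_add_le (fun s => #(f s)) (l : ZMod m) hpair

theorem sum_card_rows_le_max (hm : 2 * l ≤ m) (hn : 2 * r ≤ n) (f : ZMod m → Finset (ZMod n))
    (hf : ∀ s s', Disjoint (arc s l) (arc s' l) →
      ∀ t ∈ f s, ∀ t' ∈ f s', (arc t r ∩ arc t' r).Nonempty) :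
    ∑ s, #(f s) ≤ max (l * n) (r * m) := by
  by_cases hnear : ∃ s₀, ∀ s, (f s).Nonempty → (arc s₀ l ∩ arc s l).Nonempty
  · obtain ⟨s₀, hs₀⟩ := hnear
    exact (sum_card_le_mul_of_rows_meet_arc hm hn f hf s₀ hs₀).trans (le_max_left _ _)
  · refine (sum_card_le_mul_of_exists_disjoint_row hm hn f hf fun s => ?_).trans
      (le_max_right _ _)
    push Not at hnear
    obtain ⟨s', hs', hdisj⟩ := hnear s
    exact ⟨s', disjoint_iff_inter_eq_empty.2 hdisj, hs'⟩

theorem card_le_max_of_forall_inter_nonempty (hm : 2 * l ≤ m) (hn : 2 * r ≤ n)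
    (P : Finset (ZMod m × ZMod n))
    (hP : ∀ p ∈ P, ∀ q ∈ P, (arc p.1 l ∩ arc q.1 l).Nonempty ∨ (arc p.2 r ∩ arc q.2 r).Nonempty) :
    #P ≤ max (l * n) (r * m) := by
  set row : ZMod m → Finset (ZMod n) := fun s => {p ∈ P | p.1 = s}.image Prod.snd
  have hcard : #P = ∑ s, #(row s) := by
    rw [card_eq_sum_card_fiberwise (f := Prod.fst) (t := univ) fun _ _ => mem_coe.2 (mem_univ _)]
    refine sum_congr rfl fun s _ => (card_image_of_injOn fun p hp q hq h => ?_).symm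
    simp only [coe_filter] at hp hq
    exact Prod.ext (hp.2.trans hq.2.symm) h
  rw [hcard]
  refine sum_card_rows_le_max hm hn row fun s s' hss' t ht t' ht' => ?_
  simp only [row, mem_image, mem_filter] at ht ht'
  obtain ⟨⟨_, _⟩, ⟨hp, rfl⟩, rfl⟩ := ht
  obtain ⟨⟨_, _⟩, ⟨hq, rfl⟩, rfl⟩ := ht'
  exact (hP _ hp _ hq).resolve_left fun h => not_disjoint_iff_nonempty_inter.2 h hss'

end Circle

section PermCount

variable {β : Type*} [Fintype β] [DecidableEq β]

lemma card_perm_filter_mem_eq_self (s : Finset β) :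
    #{g : Equiv.Perm β | ({x | g x ∈ s} : Finset β) = s} = (#s)! * (Fintype.card β - #s)! := by
  have hstab : ∀ g : Equiv.Perm β,
      ({x | g x ∈ s} : Finset β) = s ↔ (fun x => decide (x ∈ s)) ∘ g = fun x => decide (x ∈ s) := by
    intro g
    simp [Finset.ext_iff, funext_iff]
  rw [← Fintype.card_subtype, Fintype.card_congr (Equiv.subtypeEquivRight hstab),
    DomMulAct.stabilizer_card, Fintype.prod_bool]
  simp [Fintype.card_subtype_compl]

lemma card_perm_filter_mem_eq {s t : Finset β} (h : #s = #t) :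
    #{g : Equiv.Perm β | ({x | g x ∈ t} : Finset β) = s} = (#s)! * (Fintype.card β - #s)! := by
  obtain ⟨π, hπ⟩ := Equiv.Perm.exists_map_finset_eq s t h
  have hπ' : ∀ x, π x ∈ t ↔ x ∈ s := fun x => hπ ▸ mem_map' π.toEmbedding
  rw [← card_perm_filter_mem_eq_self s]
  refine card_nbij' (π⁻¹ * ·) (π * ·) (fun g hg => ?_) (fun g hg => ?_)
    (fun g _ => by simp) (fun g _ => by simp)
  · simp_all [Finset.ext_iff, ← hπ']
  · simp_all [Finset.ext_iff]

lemma card_perm_exists_filter_mem_eq_arc {N c : ℕ} [NeZero N] (hc : 0 < c) (hcN : c < N)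
    {T : Finset (ZMod N)} (hT : #T = c) :
    #{π : Equiv.Perm (ZMod N) | ∃ i, ({x | π x ∈ T} : Finset _) = arc i c}
      = N * (c ! * (N - c)!) := by
  have hunion : ({π : Equiv.Perm (ZMod N) | ∃ i, ({x | π x ∈ T} : Finset _) = arc i c} : Finset _)
      = univ.biUnion fun i => {π | ({x | π x ∈ T} : Finset _) = arc i c} := by
    ext; simp
  rw [hunion, card_biUnion]
  · rw [sum_congr rfl fun i _ => card_perm_filter_mem_eq (by rw [card_arc hcN.le, hT])]
    simp [card_arc hcN.le]
  · intro i _ j _ hij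
    simp only [Function.onFun, disjoint_filter]
    intro π _ hi hj
    exact hij (arc_injective hc hcN (hi.symm.trans hj))

end PermCount

lemma exists_embedding_range_eq {α β : Type*} [Fintype β] (X : Finset α)
    (h : Fintype.card β = #X) : ∃ e : β ↪ α, Set.range e = X := by
  let σ : β ≃ X := Fintype.equivOfCardEq (h.trans (Fintype.card_coe X).symm)
  refine ⟨σ.toEmbedding.trans (Function.Embedding.subtype _), ?_⟩
  change Set.range (Subtype.val ∘ σ) = X
  rw [EquivLike.range_comp, Subtype.range_coe]

section Trace

variable {α β : Type*} [DecidableEq α] [Fintype β] {e : β ↪ α} {X : Finset α}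

lemma map_filter_mem_eq_inter (he : Set.range e = X) (A : Finset α) :
    ({z | e z ∈ A} : Finset β).map e = A ∩ X := by
  ext x
  have : x ∈ X ↔ ∃ z, e z = x := by rw [← mem_coe, ← he, Set.mem_range]
  simp only [mem_map, mem_filter, mem_univ, true_and, mem_inter, this]
  constructor
  · rintro ⟨z, hz, rfl⟩
    exact ⟨hz, z, rfl⟩
  · rintro ⟨hx, z, rfl⟩
    exact ⟨z, hx, rfl⟩

lemma card_filter_mem_eq (he : Set.range e = X) (A : Finset α) :
    #({z | e z ∈ A} : Finset β) = #(A ∩ X) := by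
  rw [← map_filter_mem_eq_inter he, card_map]

lemma filter_mem_inter_filter_mem_nonempty [DecidableEq β] (he : Set.range e = X)
    {A B : Finset α} {x : α} (hx : x ∈ A ∩ B) (hxX : x ∈ X) :
    (({z | e z ∈ A} : Finset β) ∩ ({z | e z ∈ B} : Finset β)).Nonempty := by
  obtain ⟨z, rfl⟩ : x ∈ Set.range e := he ▸ hxX
  exact ⟨z, by simpa using hx⟩

end Trace

lemma card_perm_exists_filter_comp_mem_eq_arc {α : Type*} [DecidableEq α] {N c : ℕ} [NeZero N]
    (hc : 0 < c) (hcN : c < N) {e : ZMod N ↪ α} {X : Finset α} (he : Set.range e = X)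
    {A : Finset α} (hA : #(A ∩ X) = c) :
    #{π : Equiv.Perm (ZMod N) | ∃ i, ({z | e (π z) ∈ A} : Finset _) = arc i c}
      = N * (c ! * (N - c)!) := by
  rw [← card_perm_exists_filter_mem_eq_arc hc hcN ((card_filter_mem_eq he A).trans hA)]
  simp

theorem card_filter_exists_arc_le_max {α : Type*} [DecidableEq α] {m n l r : ℕ} [NeZero m]
    [NeZero n] (hm : 2 * l ≤ m) (hn : 2 * r ≤ n) {X₁ X₂ : Finset α} {e₁ : ZMod m ↪ α}
    {e₂ : ZMod n ↪ α} (he₁ : Set.range e₁ = X₁) (he₂ : Set.range e₂ = X₂)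
    {F : Finset (Finset α)} (hF : ∀ A ∈ F, A ⊆ X₁ ∪ X₂)
    (hint : ∀ A ∈ F, ∀ B ∈ F, (A ∩ B).Nonempty) :
    #{A ∈ F | (∃ i, ({z | e₁ z ∈ A} : Finset _) = arc i l) ∧
      ∃ j, ({z | e₂ z ∈ A} : Finset _) = arc j r} ≤ max (l * n) (r * m) := by
  set P : Finset (ZMod m × ZMod n) := {p | ∃ A ∈ F,
    ({z | e₁ z ∈ A} : Finset _) = arc p.1 l ∧ ({z | e₂ z ∈ A} : Finset _) = arc p.2 r}
  calc _ ≤ #P := card_le_card_of_surjOn (fun p => (arc p.1 l).map e₁ ∪ (arc p.2 r).map e₂) ?_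
    _ ≤ _ := card_le_max_of_forall_inter_nonempty hm hn P ?_
  · intro A hA
    obtain ⟨hAF, ⟨i, hi⟩, ⟨j, hj⟩⟩ := mem_filter.1 hA
    refine ⟨(i, j), by simpa [P] using ⟨A, hAF, hi, hj⟩, ?_⟩
    dsimp only
    rw [← hi, ← hj, map_filter_mem_eq_inter he₁, map_filter_mem_eq_inter he₂,
      ← inter_union_distrib_left, inter_eq_left.2 (hF A hAF)]
  · rintro ⟨i, j⟩ hp ⟨i', j'⟩ hq
    obtain ⟨A, hA, hi, hj⟩ := by simpa [P] using hp
    obtain ⟨B, hB, hi', hj'⟩ := by simpa [P] using hq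
    obtain ⟨x, hx⟩ := hint A hA B hB
    rcases mem_union.1 (hF A hA (mem_inter.1 hx).1) with hx₁ | hx₂
    · exact Or.inl (hi ▸ hi' ▸ filter_mem_inter_filter_mem_nonempty he₁ hx hx₁)
    · exact Or.inr (hj ▸ hj' ▸ filter_mem_inter_filter_mem_nonempty he₂ hx hx₂)

lemma factorial_mul_eq_mul_choose {n c : ℕ} (hc : 0 < c) (hcn : c ≤ n) :
    n ! * c = n * (c ! * (n - c)!) * (n - 1).choose (c - 1) := by
  obtain ⟨n, rfl⟩ : ∃ n', n = n' + 1 := ⟨n - 1, by omega⟩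
  obtain ⟨c, rfl⟩ : ∃ c', c = c' + 1 := ⟨c - 1, by omega⟩
  rw [← Nat.choose_mul_factorial_mul_factorial hcn, Nat.add_sub_cancel, Nat.add_sub_cancel,
    show (n + 1) * ((c + 1)! * (n + 1 - (c + 1))!) * n.choose c
      = ((n + 1) * n.choose c) * ((c + 1)! * (n + 1 - (c + 1))!) by ring,
    Nat.add_one_mul_choose_eq]
  ring

lemma factorial_mul_self_eq_mul_choose {n c : ℕ} (hcn : c ≤ n) :
    n ! * n = n * (c ! * (n - c)!) * n.choose c := by
  rw [← Nat.choose_mul_factorial_mul_factorial hcn]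
  ring

lemma factorial_mul_factorial_mul_max {n₁ n₂ l r : ℕ} (hl : 0 < l) (hln : l ≤ n₁) (hr : 0 < r)
    (hrn : r ≤ n₂) :
    n₁ ! * n₂ ! * max (l * n₂) (r * n₁) = n₁ * (l ! * (n₁ - l)!) * (n₂ * (r ! * (n₂ - r)!)) *
      max ((n₁ - 1).choose (l - 1) * n₂.choose r) (n₁.choose l * (n₂ - 1).choose (r - 1)) := by
  rw [← Nat.mul_max_mul_left, ← Nat.mul_max_mul_left]
  congr 1
  · rw [show n₁ ! * n₂ ! * (l * n₂) = (n₁ ! * l) * (n₂ ! * n₂) by ring,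
      factorial_mul_eq_mul_choose hl hln, factorial_mul_self_eq_mul_choose hrn]
    ring
  · rw [show n₁ ! * n₂ ! * (r * n₁) = (n₁ ! * n₁) * (n₂ ! * r) by ring,
      factorial_mul_self_eq_mul_choose hln, factorial_mul_eq_mul_choose hr hrn]
    ring

end TwoPartIntersecting

open TwoPartIntersecting

theorem stmt_3_general {α : Type*} [DecidableEq α] (X1 X2 : Finset α) (n1 n2 k l : ℕ)
    (hn1 : X1.card = n1) (hn2 : X2.card = n2)
    (hl1 : 1 ≤ l) (hlk : l < k) (h1 : 2 * l ≤ n1) (h2 : 2 * (k - l) ≤ n2)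
    (F : Finset (Finset α))
    (hF : ∀ A ∈ F, A ⊆ X1 ∪ X2 ∧ A.card = k ∧
      (A ∩ X1).card = l ∧ (A ∩ X2).card = k - l)
    (hint : ∀ A ∈ F, ∀ B ∈ F, (A ∩ B).Nonempty) :
    F.card ≤ max ((n1 - 1).choose (l - 1) * n2.choose (k - l))
      (n1.choose l * (n2 - 1).choose (k - l - 1)) := by
  have : NeZero n1 := ⟨by omega⟩
  have : NeZero n2 := ⟨by omega⟩
  obtain ⟨e₁, he₁⟩ := exists_embedding_range_eq (β := ZMod n1) X1 (by simp [hn1])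
  obtain ⟨e₂, he₂⟩ := exists_embedding_range_eq (β := ZMod n2) X2 (by simp [hn2])
  let R₁ (A : Finset α) (π : Equiv.Perm (ZMod n1)) : Prop :=
    ∃ i, ({z | e₁ (π z) ∈ A} : Finset _) = arc i l
  let R₂ (A : Finset α) (π : Equiv.Perm (ZMod n2)) : Prop :=
    ∃ j, ({z | e₂ (π z) ∈ A} : Finset _) = arc j (k - l)
  let R (A : Finset α) (π : Equiv.Perm (ZMod n1) × Equiv.Perm (ZMod n2)) : Prop :=
    R₁ A π.1 ∧ R₂ A π.2
  have hcount : ∀ A ∈ F, n1 * (l ! * (n1 - l)!) * (n2 * ((k - l)! * (n2 - (k - l))!))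
      ≤ #(univ.bipartiteAbove R A) := by
    intro A hA
    obtain ⟨-, -, hA₁, hA₂⟩ := hF A hA
    dsimp only [bipartiteAbove, R]
    rw [← univ_product_univ, filter_product, card_product,
      card_perm_exists_filter_comp_mem_eq_arc hl1 (by omega) he₁ hA₁,
      card_perm_exists_filter_comp_mem_eq_arc (by omega) (by omega) he₂ hA₂]
  have hbound : ∀ π ∈ univ, #(F.bipartiteBelow R π) ≤ max (l * n2) ((k - l) * n1) :=
    fun π _ => card_filter_exists_arc_le_max h1 h2 (e₁ := π.1.toEmbedding.trans e₁)
      (e₂ := π.2.toEmbedding.trans e₂) (he₁ ▸ EquivLike.range_comp e₁ π.1)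
      (he₂ ▸ EquivLike.range_comp e₂ π.2) (fun A hA => (hF A hA).1) hint
  have := card_mul_le_card_mul R hcount hbound
  rw [card_univ, Fintype.card_prod, Fintype.card_perm, Fintype.card_perm, ZMod.card, ZMod.card,
    factorial_mul_factorial_mul_max hl1 (by omega) (by omega) (by omega), mul_comm #F] at this
  exact Nat.le_of_mul_le_mul_left this
    (Nat.mul_pos (Nat.mul_pos (by omega) (by positivity)) (Nat.mul_pos (by omega) (by positivity)))

theorem stmt_3 {α : Type*} [DecidableEq α] (X1 X2 : Finset α) (n1 n2 k l : ℕ)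
    (hdisj : Disjoint X1 X2) (hn1 : X1.card = n1) (hn2 : X2.card = n2)
    (hl1 : 1 ≤ l) (hlk : l < k) (h1 : 2 * l ≤ n1) (h2 : 2 * (k - l) ≤ n2)
    (F : Finset (Finset α))
    (hF : ∀ A ∈ F, A ⊆ X1 ∪ X2 ∧ A.card = k ∧
      (A ∩ X1).card = l ∧ (A ∩ X2).card = k - l)
    (hint : ∀ A ∈ F, ∀ B ∈ F, (A ∩ B).Nonempty) :
    F.card ≤ max ((n1 - 1).choose (l - 1) * n2.choose (k - l))
      (n1.choose l * (n2 - 1).choose (k - l - 1)) :=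
  stmt_3_general X1 X2 n1 n2 k l hn1 hn2 hl1 hlk h1 h2 F hF hint
end

section
/- Let 1 ≤ l < l' ≤ k-1, n_2 ≥ 4k·n_1 and n_1 ≥ l + l'. Let F ⊆ H(n_1,n_2,k,l) and F' ⊆ H(n_1,n_2,k,l'). Suppose F is intersecting, F' has matching number at most s, and F and F' are cross-intersecting. Then |F| + |F'| ≤ max{ C(n_1-1,l-1)C(n_2,k-l) + C(n_1-1,l'-1)C(n_2,k-l'), 2s·C(n_1-1,l'-1)C(n_2,k-l') }. -/
open Finset

set_option linter.unusedSectionVars false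
set_option maxHeartbeats 1000000

namespace Stmt4

section Arcs


variable {n : ℕ} [NeZero n]

def arc (len : ℕ) (u : ZMod n) : Finset (ZMod n) :=
  (range len).image (fun i : ℕ => u + (i : ZMod n))

lemma mem_arc {len : ℕ} {u x : ZMod n} :
    x ∈ arc len u ↔ ∃ i < len, x = u + (i : ZMod n) := by
  simp [arc, eq_comm]

lemma natCast_inj_of_lt {i j : ℕ} (hi : i < n) (hj : j < n)
    (h : (i : ZMod n) = (j : ZMod n)) : i = j := by
  have := congrArg ZMod.val h
  rwa [ZMod.val_cast_of_lt hi, ZMod.val_cast_of_lt hj] at this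

lemma cast_val_eq (x : ZMod n) : ((x.val : ℕ) : ZMod n) = x :=
  ZMod.natCast_rightInverse x

lemma val_inj' {x y : ZMod n} (h : x.val = y.val) : x = y := by
  rw [← cast_val_eq x, ← cast_val_eq y, h]

/-- Intersection criterion. -/
lemma arc_card {len : ℕ} (h : len ≤ n) (u : ZMod n) : (arc len u).card = len := by
  rw [arc, Finset.card_image_of_injOn, Finset.card_range]
  intro i hi j hj hij
  simp only [Finset.coe_range, Set.mem_Iio] at hi hj
  exact natCast_inj_of_lt (lt_of_lt_of_le hi h) (lt_of_lt_of_le hj h) (add_left_cancel hij)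

lemma arc_nonempty {len : ℕ} (h : 1 ≤ len) (u : ZMod n) : (arc len u).Nonempty := by
  refine ⟨u, ?_⟩
  rw [mem_arc]
  exact ⟨0, h, by simp⟩

lemma arc_start_inj {len : ℕ} (h1 : 1 ≤ len) (h2 : len < n) {u u' : ZMod n}
    (h : arc len u = arc len u') : u = u' := by
  have hsub : ∀ (v : ZMod n), v + ((n - 1 : ℕ) : ZMod n) ∉ arc len v := by
    intro v hv
    rw [mem_arc] at hv
    obtain ⟨i, hi, hiv⟩ := hv
    have hni : ((n - 1 : ℕ) : ZMod n) = (i : ZMod n) := add_left_cancel hiv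
    have hn1 : n - 1 < n := by have := NeZero.pos n; omega
    have := natCast_inj_of_lt hn1 (lt_trans hi h2) hni
    omega
  have hu' : u' ∈ arc len u := by
    rw [h, mem_arc]; exact ⟨0, h1, by simp⟩
  rw [mem_arc] at hu'
  obtain ⟨t, ht, hut⟩ := hu'
  rcases Nat.eq_zero_or_pos t with h0 | hpos
  · rw [hut, h0, Nat.cast_zero, add_zero]
  · exfalso
    have hmem : u' + ((n-1 : ℕ) : ZMod n) ∈ arc len u := by
      rw [mem_arc]
      refine ⟨t - 1, by omega, ?_⟩
      rw [hut]
      have hcast : ((t : ℕ) : ZMod n) + ((n-1:ℕ) : ZMod n) = ((t-1 : ℕ) : ZMod n) + ((n:ℕ) : ZMod n) := by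
        rw [← Nat.cast_add, ← Nat.cast_add]
        congr 1
        omega
      rw [add_assoc, hcast, ZMod.natCast_self, add_zero]
    rw [h] at hmem
    exact hsub u' hmem

lemma arc_meets_iff {a b : ℕ} (ha : 1 ≤ a) (hb : 1 ≤ b) (hab : a + b - 1 ≤ n) {u v : ZMod n} :
    ((arc a u) ∩ (arc b v)).Nonempty ↔ (v - u + ((b-1 : ℕ) : ZMod n)).val < a + b - 1 := by
  constructor
  · rintro ⟨x, hx⟩
    rw [Finset.mem_inter, mem_arc, mem_arc] at hx
    obtain ⟨⟨i, hi, hxi⟩, ⟨j, hj, hxj⟩⟩ := hx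
    have hvu : v - u + ((b-1:ℕ) : ZMod n) = ((i + (b-1) - j : ℕ) : ZMod n) := by
      have huv : u + (i:ZMod n) = v + (j:ZMod n) := by rw [← hxi, ← hxj]
      have hv : v = u + (i:ZMod n) - (j:ZMod n) := by rw [huv]; ring
      rw [hv]
      have hcast : ((i + (b-1) - j : ℕ) : ZMod n) = (i:ZMod n) + ((b-1:ℕ):ZMod n) - (j:ZMod n) := by
        have h1 : j ≤ i + (b-1) := by omega
        rw [Nat.cast_sub h1, Nat.cast_add]
      rw [hcast]; ring
    rw [hvu, ZMod.val_cast_of_lt (by omega : i + (b-1) - j < n)]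
    omega
  · intro hval
    set z := (v - u + ((b-1:ℕ) : ZMod n)).val with hz
    have hzval : ((z : ℕ) : ZMod n) = v - u + ((b-1:ℕ) : ZMod n) := cast_val_eq _
    have hveq : v = u + ((z:ℕ) : ZMod n) - ((b-1:ℕ) : ZMod n) := by
      rw [hzval]; ring
    rcases le_or_gt z (b-1) with hle | hgt
    · -- i = 0, j = b-1-z : u = v + (b-1-z)
      refine ⟨u, ?_⟩
      rw [Finset.mem_inter, mem_arc, mem_arc]
      refine ⟨⟨0, ha, by simp⟩, ⟨b-1-z, by omega, ?_⟩⟩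
      rw [hveq]
      have : ((b-1-z : ℕ) : ZMod n) = ((b-1:ℕ) : ZMod n) - ((z:ℕ) : ZMod n) := by
        rw [Nat.cast_sub hle]
      rw [this]; ring
    · -- i = z - (b-1), j = 0 : v = u + (z - (b-1))
      refine ⟨v, ?_⟩
      rw [Finset.mem_inter, mem_arc, mem_arc]
      refine ⟨⟨z - (b-1), by omega, ?_⟩, ⟨0, hb, by simp⟩⟩
      rw [hveq]
      have : ((z - (b-1) : ℕ) : ZMod n) = ((z:ℕ) : ZMod n) - ((b-1:ℕ) : ZMod n) := by
        rw [Nat.cast_sub (by omega)]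
      rw [this]; ring

/-- The set of starts `v` whose `b`-arc meets a fixed `a`-arc, as an image (for counting). -/
lemma meets_subset_image {a b : ℕ} (ha : 1 ≤ a) (hb : 1 ≤ b) (hab : a + b - 1 ≤ n) (u : ZMod n) :
    (Finset.univ.filter fun v : ZMod n => ((arc a u) ∩ (arc b v)).Nonempty) ⊆
      (range (a+b-1)).image (fun w : ℕ => u - ((b-1:ℕ) : ZMod n) + (w : ZMod n)) := by
  intro v hv
  rw [Finset.mem_filter] at hv
  rw [arc_meets_iff ha hb hab] at hv
  rw [Finset.mem_image]
  refine ⟨(v - u + ((b-1:ℕ) : ZMod n)).val, Finset.mem_range.2 hv.2, ?_⟩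
  rw [cast_val_eq]
  ring

lemma meets_card_le {a b : ℕ} (ha : 1 ≤ a) (hb : 1 ≤ b) (hab : a + b - 1 ≤ n) (u : ZMod n) :
    (Finset.univ.filter fun v : ZMod n => ((arc a u) ∩ (arc b v)).Nonempty).card ≤ a + b - 1 := by
  calc _ ≤ ((range (a+b-1)).image (fun w : ℕ => u - ((b-1:ℕ) : ZMod n) + (w : ZMod n))).card :=
        Finset.card_le_card (meets_subset_image ha hb hab u)
    _ ≤ (range (a+b-1)).card := Finset.card_image_le
    _ = a + b - 1 := Finset.card_range _


/-- Union of distinct translates of an interval is large. -/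
lemma union_translates_card {c : ℕ} (hc : 1 ≤ c) (hcn : c ≤ n) (T : Finset (ZMod n)) (hT : T.Nonempty) :
    min n (T.card + c - 1) ≤
      (T.biUnion (fun t => (range c).image (fun y : ℕ => t + (y : ZMod n)))).card := by
  set U := T.biUnion (fun t => (range c).image (fun y : ℕ => t + (y : ZMod n))) with hU
  by_cases huniv : U = Finset.univ
  · rw [huniv, Finset.card_univ, ZMod.card]
    exact min_le_left _ _
  · -- pick z outside U
    have hss : U ⊂ Finset.univ := Finset.ssubset_iff_subset_ne.2 ⟨Finset.subset_univ _, huniv⟩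
    obtain ⟨z, _, hzU⟩ := Finset.exists_of_ssubset hss
    set ψ : ZMod n → ℕ := fun x => (x - z - 1).val with hψ
    have hψinj : Function.Injective ψ := by
      intro x y hxy
      have : x - z - 1 = y - z - 1 := val_inj' hxy
      have := congrArg (fun w => w + z + 1) this
      simpa using this
    -- all elements of T have small ψ
    have hTsmall : ∀ t ∈ T, ψ t ≤ n - c - 1 := by
      intro t ht
      by_contra hcon
      push_neg at hcon
      obtain ⟨w, hw⟩ : ∃ w, ψ t = w := ⟨ψ t, rfl⟩
      have hval : w < n := hw ▸ ZMod.val_lt (t - z - 1)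
      have h1 : n - c ≤ w := by omega
      have hteq : t = z + ((w + 1 : ℕ) : ZMod n) := by
        have hcv : ((w : ℕ) : ZMod n) = t - z - 1 := by rw [← hw]; exact cast_val_eq _
        rw [Nat.cast_add, Nat.cast_one, hcv]; ring
      have hzin : z ∈ U := by
        rw [hU, Finset.mem_biUnion]
        refine ⟨t, ht, ?_⟩
        rw [Finset.mem_image]
        refine ⟨n - (w + 1), ?_, ?_⟩
        · rw [Finset.mem_range]; omega
        · rw [hteq, add_assoc, ← Nat.cast_add]
          have hn : w + 1 + (n - (w + 1)) = n := by omega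
          rw [hn, ZMod.natCast_self, add_zero]
      exact hzU hzin
    have hψadd : ∀ t ∈ T, ∀ y < c, ψ (t + (y : ZMod n)) = ψ t + y := by
      intro t ht y hy
      have h1 : ψ t + y < n := by
        have := hTsmall t ht
        omega
      have : t + (y : ZMod n) - z - 1 = ((ψ t + y : ℕ) : ZMod n) := by
        rw [Nat.cast_add]
        have : ((ψ t : ℕ) : ZMod n) = t - z - 1 := cast_val_eq _
        rw [this]; ring
      rw [hψ]
      simp only []
      rw [this, ZMod.val_cast_of_lt h1]
    -- S := ψ '' T, M := max S + range c
    set S := T.image ψ with hS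
    have hSne : S.Nonempty := hT.image _
    set m0 := S.max' hSne with hm0
    obtain ⟨t0, ht0, ht0m⟩ := Finset.mem_image.1 (S.max'_mem hSne)
    set M := (range c).image (fun y : ℕ => m0 + y) with hM
    have hMcard : M.card = c := by
      rw [hM, Finset.card_image_of_injective _ (add_right_injective m0), Finset.card_range]
    have hScard : S.card = T.card := Finset.card_image_of_injective _ hψinj
    have hsub : S ∪ M ⊆ U.image ψ := by
      intro x hx
      rw [Finset.mem_union] at hx
      rcases hx with hx | hx
      · obtain ⟨t, ht, htx⟩ := Finset.mem_image.1 hx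
        rw [Finset.mem_image]
        refine ⟨t, ?_, htx⟩
        rw [hU, Finset.mem_biUnion]
        exact ⟨t, ht, Finset.mem_image.2 ⟨0, Finset.mem_range.2 hc, by simp⟩⟩
      · obtain ⟨y, hy, hyx⟩ := Finset.mem_image.1 hx
        rw [Finset.mem_range] at hy
        rw [Finset.mem_image]
        refine ⟨t0 + (y : ZMod n), ?_, ?_⟩
        · rw [hU, Finset.mem_biUnion]
          exact ⟨t0, ht0, Finset.mem_image.2 ⟨y, Finset.mem_range.2 hy, rfl⟩⟩
        · rw [hψadd t0 ht0 y hy, ht0m, hyx]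
    have hinter : (S ∩ M).card ≤ 1 := by
      rw [Finset.card_le_one]
      intro x hx y hy
      rw [Finset.mem_inter] at hx hy
      have hx1 : x ≤ m0 := S.le_max' x hx.1
      have hy1 : y ≤ m0 := S.le_max' y hy.1
      obtain ⟨yx, _, hyx⟩ := Finset.mem_image.1 hx.2
      obtain ⟨yy, _, hyy⟩ := Finset.mem_image.1 hy.2
      omega
    have hcard1 : (S ∪ M).card + (S ∩ M).card = S.card + M.card :=
      Finset.card_union_add_card_inter S M
    have hUcard : (S ∪ M).card ≤ U.card := by
      calc (S ∪ M).card ≤ (U.image ψ).card := Finset.card_le_card hsub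
        _ ≤ U.card := Finset.card_image_le
    have h2 : T.card + c - 1 ≤ (S ∪ M).card := by omega
    calc min n (T.card + c - 1) ≤ T.card + c - 1 := min_le_right _ _
      _ ≤ (S ∪ M).card := h2
      _ ≤ U.card := hUcard


end Arcs

section MeetsAll
variable {n : ℕ} [NeZero n]

variable {n : ℕ} [NeZero n]

/-- Key lemma: the number of `b`-arcs meeting all arcs of a family `T` of `a`-arcs
(given by their starts) is at most `a + b - |T|`. -/
lemma meets_all_card_le {a b : ℕ} (ha : 1 ≤ a) (hb : 1 ≤ b) (hab : a + b ≤ n)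
    (T : Finset (ZMod n)) (hT : T.Nonempty) :
    (Finset.univ.filter fun v : ZMod n => ∀ u ∈ T, ((arc a u) ∩ (arc b v)).Nonempty).card
      ≤ a + b - T.card := by
  classical
  set R := (Finset.univ.filter fun v : ZMod n => ∀ u ∈ T, ((arc a u) ∩ (arc b v)).Nonempty) with hR
  set c := n - (a + b - 1) with hc
  have hc1 : 1 ≤ c := by omega
  have hcn : c ≤ n := by omega
  set T' := T.image (fun t => t + ((a:ℕ) : ZMod n)) with hT'
  have hT'card : T'.card = T.card :=
    Finset.card_image_of_injective _ (add_left_injective _)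
  have hT'ne : T'.Nonempty := hT.image _
  set U := T'.biUnion (fun t => (range c).image (fun y : ℕ => t + (y : ZMod n))) with hU
  have hUbig : min n (T.card + c - 1) ≤ U.card := by
    rw [← hT'card]
    exact union_translates_card hc1 hcn T' hT'ne
  have hdisj : Disjoint R U := by
    rw [Finset.disjoint_left]
    intro v hvR hvU
    rw [hU, Finset.mem_biUnion] at hvU
    obtain ⟨t', ht', hvt'⟩ := hvU
    rw [hT', Finset.mem_image] at ht'
    obtain ⟨t, ht, htt'⟩ := ht'
    rw [Finset.mem_image] at hvt'
    obtain ⟨y, hy, hyv⟩ := hvt'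
    rw [Finset.mem_range] at hy
    -- v = t + cast (a + y)
    have hveq : v = t + ((a + y : ℕ) : ZMod n) := by
      rw [← hyv, ← htt', Nat.cast_add, add_assoc]
    have hmeets : ((arc a t) ∩ (arc b v)).Nonempty := by
      rw [hR, Finset.mem_filter] at hvR
      exact hvR.2 t ht
    rw [arc_meets_iff ha hb (by omega)] at hmeets
    have hval : v - t + ((b-1:ℕ) : ZMod n) = ((a + y + (b-1) : ℕ) : ZMod n) := by
      rw [hveq]
      rw [Nat.cast_add (a+y)]
      ring
    rw [hval, ZMod.val_cast_of_lt (by omega : a + y + (b-1) < n)] at hmeets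
    omega
  have hsum : R.card + U.card ≤ n := by
    have : (R ∪ U).card = R.card + U.card := Finset.card_union_of_disjoint hdisj
    have h2 : (R ∪ U).card ≤ n := by
      calc (R ∪ U).card ≤ (Finset.univ : Finset (ZMod n)).card := Finset.card_le_card (Finset.subset_univ _)
        _ = n := by rw [Finset.card_univ, ZMod.card]
    omega
  omega


end MeetsAll


/-- Greedy bound: if every element of `Q` conflicts with at most `w` elements of `Q`
(including itself), the relation is symmetric and reflexive on `Q`, and every
conflict-free subset has size at most `s`, then `|Q| ≤ s * w`. -/
lemma greedy_bound {β : Type*} [DecidableEq β] (R : β → β → Prop) [DecidableRel R]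
    (hsymm : ∀ p q, R p q → R q p) :
    ∀ (s : ℕ) (Q : Finset β),
    (∀ q ∈ Q, R q q) →
    (∀ q ∈ Q, ∀ w : ℕ, (Q.filter (R q)).card ≤ w → True) →  -- dummy
    ∀ w : ℕ,
    (∀ q ∈ Q, (Q.filter (R q)).card ≤ w) →
    (∀ M ⊆ Q, (∀ p ∈ M, ∀ q ∈ M, p ≠ q → ¬ R p q) → M.card ≤ s) →
    Q.card ≤ s * w := by
  intro s
  induction s with
  | zero =>
    intro Q hrefl _ w _ hmatch
    have hQ0 : Q.card ≤ 0 := by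
      by_contra hne
      push_neg at hne
      obtain ⟨q, hq⟩ := Finset.card_pos.1 hne
      have h1 := hmatch {q} (by simpa using hq) ?_
      · simp at h1
      · intro p hp r hr hpr
        simp only [Finset.mem_singleton] at hp hr
        exact absurd (hp.trans hr.symm) hpr
    omega
  | succ s ih =>
    intro Q hrefl _ w hdeg hmatch
    rcases Q.eq_empty_or_nonempty with hQ | ⟨q0, hq0⟩
    · simp [hQ]
    · set Q' := Q.filter (fun r => ¬ R q0 r) with hQ'
      have hsplit : Q.card = (Q.filter (R q0)).card + Q'.card :=
        (Finset.card_filter_add_card_filter_not (fun r => R q0 r)).symm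
      have hQ'sub : Q' ⊆ Q := Finset.filter_subset _ _
      have hQ'card : Q'.card ≤ s * w := by
        apply ih Q' (fun q hq => hrefl q (hQ'sub hq)) (fun _ _ _ _ => trivial) w
        · intro q hq
          calc (Q'.filter (R q)).card ≤ (Q.filter (R q)).card :=
                Finset.card_le_card (Finset.filter_subset_filter _ hQ'sub)
            _ ≤ w := hdeg q (hQ'sub hq)
        · intro M hM hMfree
          have hq0M : q0 ∉ M := by
            intro hmem
            have := hM hmem
            rw [hQ', Finset.mem_filter] at this
            exact this.2 (hrefl q0 hq0)
          have : (insert q0 M).card ≤ s + 1 := by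
            apply hmatch (insert q0 M)
            · intro x hx
              rw [Finset.mem_insert] at hx
              rcases hx with rfl | hx
              · exact hq0
              · exact hQ'sub (hM hx)
            · intro p hp q hq hpq
              rw [Finset.mem_insert] at hp hq
              rcases hp with rfl | hp
              · rcases hq with rfl | hq
                · exact absurd rfl hpq
                · have := hM hq
                  rw [hQ', Finset.mem_filter] at this
                  exact this.2
              · rcases hq with rfl | hq
                · have := hM hp
                  rw [hQ', Finset.mem_filter] at this
                  exact fun hr => this.2 (hsymm _ _ hr)
                · exact hMfree p hp q hq hpq
          rw [Finset.card_insert_of_notMem hq0M] at this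
          omega
      have hdeg0 : (Q.filter (R q0)).card ≤ w := hdeg q0 hq0
      calc Q.card = (Q.filter (R q0)).card + Q'.card := hsplit
        _ ≤ w + s * w := by omega
        _ = (s + 1) * w := by ring


section PSM

variable {n1 n2 : ℕ} [NeZero n1] [NeZero n2]

lemma fiber_image_card (P : Finset (ZMod n1 × ZMod n2)) (J : ZMod n2) :
    ((P.filter (fun p => p.2 = J)).image Prod.fst).card = (P.filter (fun p => p.2 = J)).card := by
  apply Finset.card_image_of_injOn
  intro p hp q hq h
  simp only [Finset.coe_filter, Set.mem_setOf_eq] at hp hq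
  exact Prod.ext h (hp.2.trans hq.2.symm)

lemma mem_fiber_image {P : Finset (ZMod n1 × ZMod n2)} {J : ZMod n2} {u : ZMod n1} :
    u ∈ (P.filter (fun p => p.2 = J)).image Prod.fst ↔ (u, J) ∈ P := by
  constructor
  · intro h
    obtain ⟨p, hp, hpu⟩ := Finset.mem_image.1 h
    rw [Finset.mem_filter] at hp
    have : p = (u, J) := Prod.ext hpu hp.2
    exact this ▸ hp.1
  · intro h
    exact Finset.mem_image.2 ⟨(u, J), Finset.mem_filter.2 ⟨h, rfl⟩, rfl⟩

/-- Per-cyclic-order master lemma. `P` consists of (start of `a`-arc in `ZMod n1`,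
start of `c`-arc in `ZMod n2`) pairs; `P'` of (`b`-arc, `d`-arc) pairs.  -/
lemma psm (a b c d k s E E' : ℕ)
    (ha : 1 ≤ a) (hab : a < b) (hsum : a + b ≤ n1)
    (hc1 : 1 ≤ c) (hd1 : 1 ≤ d) (hck : c ≤ k) (hdk : d ≤ k) (hk1 : 1 ≤ k)
    (hn1 : 1 ≤ n1)
    (hbig : 4 * k * n1 ≤ n2)
    (hNL : 2 * a * E' ≤ E)
    (P P' : Finset (ZMod n1 × ZMod n2))
    (hint : ∀ p ∈ P, ∀ q ∈ P,
      ((arc a p.1 ∩ arc a q.1).Nonempty ∨ (arc c p.2 ∩ arc c q.2).Nonempty))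
    (hcross : ∀ p ∈ P, ∀ q ∈ P',
      ((arc a p.1 ∩ arc b q.1).Nonempty ∨ (arc c p.2 ∩ arc d q.2).Nonempty))
    (hnu : ∀ M ⊆ P', (∀ p ∈ M, ∀ q ∈ M, p ≠ q →
      ¬(((arc b p.1 ∩ arc b q.1).Nonempty ∨ (arc d p.2 ∩ arc d q.2).Nonempty))) → M.card ≤ s) :
    E * P.card + E' * P'.card ≤
      max ((a * E + b * E') * n2) (2 * s * (b * E') * n2) := by
  classical
  have hn2pos : 0 < n2 := by
    have := NeZero.pos n2; omega
  have h2kn1 : 2 * (2 * k * n1) ≤ n2 := by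
    have : 2 * (2 * k * n1) = 4 * k * n1 := by ring
    omega
  rcases P.eq_empty_or_nonempty with hP | ⟨p₀, hp₀⟩
  · -- P empty: use the matching bound on P'
    subst hP
    have hb1 : 1 ≤ b := by omega
    have hP' : P'.card ≤ s * ((2*b - 1) * n2 + (2*d - 1) * n1) := by
      apply greedy_bound
        (fun q r : ZMod n1 × ZMod n2 =>
          (arc b q.1 ∩ arc b r.1).Nonempty ∨ (arc d q.2 ∩ arc d r.2).Nonempty)
        (fun p q hpq => by
          rcases hpq with h | h
          · exact Or.inl (by rwa [Finset.inter_comm] at h)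
          · exact Or.inr (by rwa [Finset.inter_comm] at h))
        s P'
        (fun q _ => Or.inl (by rw [Finset.inter_self]; exact arc_nonempty hb1 _))
        (fun _ _ _ _ => trivial)
        ((2*b - 1) * n2 + (2*d - 1) * n1)
        ?_ hnu
      intro q hq
      have hsub : P'.filter (fun r => (arc b q.1 ∩ arc b r.1).Nonempty ∨
          (arc d q.2 ∩ arc d r.2).Nonempty) ⊆
          ((Finset.univ.filter fun w : ZMod n1 => ((arc b q.1) ∩ (arc b w)).Nonempty) ×ˢ Finset.univ)
          ∪ (Finset.univ ×ˢ (Finset.univ.filter fun w : ZMod n2 => ((arc d q.2) ∩ (arc d w)).Nonempty)) := by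
        intro r hr
        rw [Finset.mem_filter] at hr
        rcases hr.2 with h | h
        · exact Finset.mem_union_left _ (Finset.mem_product.2
            ⟨Finset.mem_filter.2 ⟨Finset.mem_univ _, h⟩, Finset.mem_univ _⟩)
        · exact Finset.mem_union_right _ (Finset.mem_product.2
            ⟨Finset.mem_univ _, Finset.mem_filter.2 ⟨Finset.mem_univ _, h⟩⟩)
      have hW1 : (Finset.univ.filter fun w : ZMod n1 => ((arc b q.1) ∩ (arc b w)).Nonempty).card
          ≤ 2*b - 1 := by
        by_cases h2b : b + b - 1 ≤ n1
        · have := meets_card_le hb1 hb1 h2b q.1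
          omega
        · calc (Finset.univ.filter fun w : ZMod n1 => ((arc b q.1) ∩ (arc b w)).Nonempty).card
              ≤ (Finset.univ : Finset (ZMod n1)).card := Finset.card_le_card (Finset.filter_subset _ _)
            _ = n1 := by rw [Finset.card_univ, ZMod.card]
            _ ≤ 2*b - 1 := by omega
      have hW2 : (Finset.univ.filter fun w : ZMod n2 => ((arc d q.2) ∩ (arc d w)).Nonempty).card
          ≤ 2*d - 1 := by
        have hdd : d + d - 1 ≤ n2 := by
          have : 2 * d ≤ 2 * k := by omega
          have h4 : 4 * k ≤ 4 * k * n1 := by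
            calc 4 * k = 4 * k * 1 := by ring
              _ ≤ 4 * k * n1 := Nat.mul_le_mul_left _ hn1
          omega
        have := meets_card_le hd1 hd1 hdd q.2
        omega
      calc (P'.filter (fun r => (arc b q.1 ∩ arc b r.1).Nonempty ∨
            (arc d q.2 ∩ arc d r.2).Nonempty)).card
          ≤ _ := Finset.card_le_card hsub
        _ ≤ ((Finset.univ.filter fun w : ZMod n1 => ((arc b q.1) ∩ (arc b w)).Nonempty) ×ˢ
              (Finset.univ : Finset (ZMod n2))).card +
            ((Finset.univ : Finset (ZMod n1)) ×ˢ
              (Finset.univ.filter fun w : ZMod n2 => ((arc d q.2) ∩ (arc d w)).Nonempty)).card :=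
            Finset.card_union_le _ _
        _ ≤ (2*b - 1) * n2 + (2*d - 1) * n1 := by
            rw [Finset.card_product, Finset.card_product, Finset.card_univ, Finset.card_univ,
              ZMod.card, ZMod.card]
            exact Nat.add_le_add (Nat.mul_le_mul_right n2 hW1)
              (by rw [Nat.mul_comm]; exact Nat.mul_le_mul_right n1 hW2)
    have hfin : E' * P'.card ≤ 2 * s * (b * E') * n2 := by
      have hstep : (2*b - 1) * n2 + (2*d - 1) * n1 ≤ 2 * b * n2 := by
        have h1 : (2*d - 1) * n1 ≤ 2 * k * n1 := Nat.mul_le_mul_right n1 (by omega)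
        have h2 : 2 * k * n1 ≤ n2 := by omega
        have h3 : (2*b - 1) * n2 + n2 = (2 * b - 1 + 1) * n2 := by ring
        have h4 : 2 * b - 1 + 1 = 2 * b := by omega
        calc (2*b - 1) * n2 + (2*d - 1) * n1 ≤ (2*b - 1) * n2 + n2 := by omega
          _ = 2 * b * n2 := by rw [h3, h4]
      calc E' * P'.card ≤ E' * (s * ((2*b - 1) * n2 + (2*d - 1) * n1)) :=
            Nat.mul_le_mul_left E' hP'
        _ ≤ E' * (s * (2 * b * n2)) := Nat.mul_le_mul_left E' (Nat.mul_le_mul_left s hstep)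
        _ = 2 * s * (b * E') * n2 := by ring
    simp only [Finset.card_empty, Nat.mul_zero, Nat.zero_add]
    exact le_trans hfin (le_max_right _ _)
  · -- P nonempty
    by_cases hcase : 2 * P.card + n2 ≤ 2 * a * n2
    · -- case (i): large deficit
      have hcd : c + d - 1 ≤ n2 := by
        have h4 : 4 * k ≤ 4 * k * n1 := by
          calc 4 * k = 4 * k * 1 := by ring
            _ ≤ 4 * k * n1 := Nat.mul_le_mul_left _ hn1
        omega
      have hb1 : 1 ≤ b := by omega
      have habn : a + b - 1 ≤ n1 := by omega
      have hP'bd : P'.card ≤ (c + d - 1) * n1 + (a + b - 1) * n2 := by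
        have hsplit : P'.card = (P'.filter (fun q => (arc c p₀.2 ∩ arc d q.2).Nonempty)).card +
            (P'.filter (fun q => ¬ (arc c p₀.2 ∩ arc d q.2).Nonempty)).card :=
          (Finset.card_filter_add_card_filter_not _).symm
        have h1 : (P'.filter (fun q => (arc c p₀.2 ∩ arc d q.2).Nonempty)).card ≤
            (c + d - 1) * n1 := by
          have hsub : P'.filter (fun q => (arc c p₀.2 ∩ arc d q.2).Nonempty) ⊆
              (Finset.univ : Finset (ZMod n1)) ×ˢ
                (Finset.univ.filter fun v : ZMod n2 => ((arc c p₀.2) ∩ (arc d v)).Nonempty) := by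
            intro q hq
            rw [Finset.mem_filter] at hq
            exact Finset.mem_product.2 ⟨Finset.mem_univ _,
              Finset.mem_filter.2 ⟨Finset.mem_univ _, hq.2⟩⟩
          calc (P'.filter (fun q => (arc c p₀.2 ∩ arc d q.2).Nonempty)).card
              ≤ _ := Finset.card_le_card hsub
            _ ≤ (c + d - 1) * n1 := by
              rw [Finset.card_product, Finset.card_univ, ZMod.card]
              rw [Nat.mul_comm]
              exact Nat.mul_le_mul_right n1 (meets_card_le hc1 hd1 hcd p₀.2)
        have h2 : (P'.filter (fun q => ¬ (arc c p₀.2 ∩ arc d q.2).Nonempty)).card ≤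
            (a + b - 1) * n2 := by
          have hsub : P'.filter (fun q => ¬ (arc c p₀.2 ∩ arc d q.2).Nonempty) ⊆
              (Finset.univ.filter fun w : ZMod n1 => ((arc a p₀.1) ∩ (arc b w)).Nonempty) ×ˢ
                (Finset.univ : Finset (ZMod n2)) := by
            intro q hq
            rw [Finset.mem_filter] at hq
            have := hcross p₀ hp₀ q hq.1
            rcases this with h | h
            · exact Finset.mem_product.2 ⟨Finset.mem_filter.2 ⟨Finset.mem_univ _, h⟩,
                Finset.mem_univ _⟩
            · exact absurd h hq.2
          calc (P'.filter (fun q => ¬ (arc c p₀.2 ∩ arc d q.2).Nonempty)).card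
              ≤ _ := Finset.card_le_card hsub
            _ ≤ (a + b - 1) * n2 := by
              rw [Finset.card_product, Finset.card_univ, ZMod.card]
              exact Nat.mul_le_mul_right n2 (meets_card_le ha hb1 habn p₀.1)
        omega
      have hfin : E * P.card + E' * P'.card ≤ (a * E + b * E') * n2 := by
        have h1 : E * (2 * P.card + n2) ≤ E * (2 * a * n2) := Nat.mul_le_mul_left E hcase
        have h3 : 2 * ((c + d - 1) * n1) ≤ n2 := by
          have : 2 * (c + d - 1) ≤ 2 * (2 * k) := by omega
          calc 2 * ((c + d - 1) * n1) = (2 * (c + d - 1)) * n1 := by ring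
            _ ≤ (2 * (2 * k)) * n1 := Nat.mul_le_mul_right n1 this
            _ = 2 * (2 * k * n1) := by ring
            _ ≤ n2 := h2kn1
        have h2' : 2 * (E' * P'.card) ≤ E' * n2 + 2 * E' * ((a + b - 1) * n2) := by
          calc 2 * (E' * P'.card) ≤ 2 * (E' * ((c + d - 1) * n1 + (a + b - 1) * n2)) := by
                exact Nat.mul_le_mul_left 2 (Nat.mul_le_mul_left E' hP'bd)
            _ = E' * (2 * ((c + d - 1) * n1)) + 2 * E' * ((a + b - 1) * n2) := by ring
            _ ≤ E' * n2 + 2 * E' * ((a + b - 1) * n2) := by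
                exact Nat.add_le_add_right (Nat.mul_le_mul_left E' h3) _
        have h4 : E' * n2 + 2 * E' * ((a + b - 1) * n2) ≤ 2 * (b * E') * n2 + E * n2 := by
          calc E' * n2 + 2 * E' * ((a + b - 1) * n2) = (2 * (a + b - 1) + 1) * (E' * n2) := by ring
            _ ≤ (2 * a + 2 * b) * (E' * n2) := Nat.mul_le_mul_right _ (by omega)
            _ = 2 * (b * E') * n2 + (2 * a * E') * n2 := by ring
            _ ≤ 2 * (b * E') * n2 + E * n2 := Nat.add_le_add_left (Nat.mul_le_mul_right n2 hNL) _
        have hchain : 2 * (E * P.card + E' * P'.card) + E * n2 ≤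
            2 * ((a * E + b * E') * n2) + E * n2 := by
          calc 2 * (E * P.card + E' * P'.card) + E * n2
              = E * (2 * P.card + n2) + 2 * (E' * P'.card) := by ring
            _ ≤ E * (2 * a * n2) + (E' * n2 + 2 * E' * ((a + b - 1) * n2)) :=
                Nat.add_le_add h1 h2'
            _ ≤ E * (2 * a * n2) + (2 * (b * E') * n2 + E * n2) := Nat.add_le_add_left h4 _
            _ = 2 * ((a * E + b * E') * n2) + E * n2 := by ring
        omega
      exact le_trans hfin (le_max_left _ _)
    · -- case (ii): P nearly full
      push_neg at hcase
      have h4k : 4 * k ≤ 4 * k * n1 := by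
        calc 4 * k = 4 * k * 1 := by ring
          _ ≤ 4 * k * n1 := Nat.mul_le_mul_left _ hn1
      have hb1 : 1 ≤ b := by omega
      have h2a : a + a ≤ n1 := by omega
      have hfc : ∀ J : ZMod n2, (P.filter (fun p => p.2 = J)).card ≤ a := by
        intro J0
        by_contra hcon
        push_neg at hcon
        -- J0 is heavy
        have hcc : c + c - 1 ≤ n2 := by omega
        set fib0 := (P.filter (fun p => p.2 = J0)).image Prod.fst with hfib0
        have hfib0card : a + 1 ≤ fib0.card := by
          rw [hfib0, fiber_image_card]; omega
        obtain ⟨T, hTsub, hTcard⟩ := Finset.exists_subset_card_eq hfib0card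
        have hTne : T.Nonempty := Finset.card_pos.1 (by omega)
        -- far fibers are small
        have hfar : ∀ J : ZMod n2, ¬ ((arc c J0 ∩ arc c J).Nonempty) →
            (P.filter (fun p => p.2 = J)).card ≤ a - 1 := by
          intro J hJfar
          have hsub : (P.filter (fun p => p.2 = J)).image Prod.fst ⊆
              Finset.univ.filter (fun v : ZMod n1 => ∀ u ∈ T, ((arc a u) ∩ (arc a v)).Nonempty) := by
            intro v hv
            rw [mem_fiber_image] at hv
            rw [Finset.mem_filter]
            refine ⟨Finset.mem_univ _, fun u hu => ?_⟩
            have huP : (u, J0) ∈ P := mem_fiber_image.1 (hTsub hu)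
            rcases hint (u, J0) huP (v, J) hv with h | h
            · exact h
            · exact absurd h hJfar
          calc (P.filter (fun p => p.2 = J)).card
              = ((P.filter (fun p => p.2 = J)).image Prod.fst).card := (fiber_image_card P J).symm
            _ ≤ _ := Finset.card_le_card hsub
            _ ≤ a + a - T.card := meets_all_card_le ha ha h2a T hTne
            _ = a - 1 := by omega
        -- sum over near and far
        have hPsum : P.card = ∑ J ∈ (Finset.univ : Finset (ZMod n2)),
            (P.filter (fun p => p.2 = J)).card :=
          Finset.card_eq_sum_card_fiberwise (fun p _ => Finset.mem_univ p.2)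
        have hsplit := Finset.sum_filter_add_sum_filter_not (Finset.univ : Finset (ZMod n2))
          (fun J => (arc c J0 ∩ arc c J).Nonempty)
          (fun J => (P.filter (fun p => p.2 = J)).card)
        have hnear : ∑ J ∈ Finset.univ.filter (fun J : ZMod n2 => (arc c J0 ∩ arc c J).Nonempty),
            (P.filter (fun p => p.2 = J)).card ≤ (2*c - 1) * n1 := by
          have hcards : ∀ J : ZMod n2, (P.filter (fun p => p.2 = J)).card ≤ n1 := by
            intro J
            calc (P.filter (fun p => p.2 = J)).card
                = ((P.filter (fun p => p.2 = J)).image Prod.fst).card := (fiber_image_card P J).symm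
              _ ≤ (Finset.univ : Finset (ZMod n1)).card :=
                  Finset.card_le_card (Finset.subset_univ _)
              _ = n1 := by rw [Finset.card_univ, ZMod.card]
          calc ∑ J ∈ Finset.univ.filter (fun J : ZMod n2 => (arc c J0 ∩ arc c J).Nonempty),
              (P.filter (fun p => p.2 = J)).card
              ≤ ∑ _J ∈ Finset.univ.filter (fun J : ZMod n2 => (arc c J0 ∩ arc c J).Nonempty), n1 :=
                Finset.sum_le_sum (fun J _ => hcards J)
            _ = (Finset.univ.filter (fun J : ZMod n2 => (arc c J0 ∩ arc c J).Nonempty)).card * n1 := by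
                rw [Finset.sum_const, smul_eq_mul]
            _ ≤ (2*c - 1) * n1 := Nat.mul_le_mul_right n1 (by
                have := meets_card_le hc1 hc1 hcc J0
                omega)
        have hfarsum : ∑ J ∈ Finset.univ.filter (fun J : ZMod n2 => ¬ (arc c J0 ∩ arc c J).Nonempty),
            (P.filter (fun p => p.2 = J)).card ≤ n2 * (a - 1) := by
          calc ∑ J ∈ Finset.univ.filter (fun J : ZMod n2 => ¬ (arc c J0 ∩ arc c J).Nonempty),
              (P.filter (fun p => p.2 = J)).card
              ≤ ∑ _J ∈ Finset.univ.filter (fun J : ZMod n2 => ¬ (arc c J0 ∩ arc c J).Nonempty),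
                (a - 1) := Finset.sum_le_sum (fun J hJ => hfar J (Finset.mem_filter.1 hJ).2)
            _ = (Finset.univ.filter (fun J : ZMod n2 => ¬ (arc c J0 ∩ arc c J).Nonempty)).card * (a-1) := by
                rw [Finset.sum_const, smul_eq_mul]
            _ ≤ n2 * (a - 1) := Nat.mul_le_mul_right _ (by
                calc (Finset.univ.filter (fun J : ZMod n2 => ¬ (arc c J0 ∩ arc c J).Nonempty)).card
                    ≤ (Finset.univ : Finset (ZMod n2)).card :=
                      Finset.card_le_card (Finset.filter_subset _ _)
                  _ = n2 := by rw [Finset.card_univ, ZMod.card])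
        have hPbd : P.card ≤ (2*c - 1) * n1 + n2 * (a - 1) := by
          rw [hPsum, ← hsplit]
          omega
        -- contradiction with hcase
        have hc4 : 2 * ((2*c - 1) * n1) ≤ n2 := by
          calc 2 * ((2*c - 1) * n1) = (2 * (2*c - 1)) * n1 := by ring
            _ ≤ (4 * k) * n1 := Nat.mul_le_mul_right n1 (by omega)
            _ ≤ n2 := hbig
        have : 2 * P.card + n2 ≤ 2 * a * n2 := by
          have hexp : 2 * (n2 * (a-1)) + 2 * n2 = 2 * ((a-1) + 1) * n2 := by ring
          have ha1 : (a - 1) + 1 = a := by omega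
          calc 2 * P.card + n2 ≤ 2 * ((2*c-1) * n1) + 2 * (n2 * (a-1)) + n2 := by omega
            _ ≤ n2 + 2 * (n2 * (a-1)) + n2 := by omega
            _ = 2 * ((a-1) + 1) * n2 := by ring
            _ = 2 * a * n2 := by rw [ha1]
        omega
      -- count "bad" (deficient) fibers of P
      set bad := (Finset.univ : Finset (ZMod n2)).filter
        (fun J => (P.filter (fun p => p.2 = J)).card + 1 ≤ a) with hbad
      have hbadbound : P.card + bad.card ≤ a * n2 := by
        have hPsum : P.card = ∑ J ∈ (Finset.univ : Finset (ZMod n2)),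
            (P.filter (fun p => p.2 = J)).card :=
          Finset.card_eq_sum_card_fiberwise (fun p _ => Finset.mem_univ p.2)
        have hbadsum : bad.card = ∑ J ∈ (Finset.univ : Finset (ZMod n2)),
            (if (P.filter (fun p => p.2 = J)).card + 1 ≤ a then 1 else 0) := by
          rw [hbad, Finset.card_filter]
        have hpt : ∀ J : ZMod n2, (P.filter (fun p => p.2 = J)).card +
            (if (P.filter (fun p => p.2 = J)).card + 1 ≤ a then 1 else 0) ≤ a := by
          intro J
          have := hfc J
          split <;> omega
        calc P.card + bad.card
            = ∑ J ∈ (Finset.univ : Finset (ZMod n2)), ((P.filter (fun p => p.2 = J)).card +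
              (if (P.filter (fun p => p.2 = J)).card + 1 ≤ a then 1 else 0)) := by
              rw [Finset.sum_add_distrib, ← hPsum, ← hbadsum]
          _ ≤ ∑ _J ∈ (Finset.univ : Finset (ZMod n2)), a := Finset.sum_le_sum (fun J _ => hpt J)
          _ = n2 * a := by rw [Finset.sum_const, Finset.card_univ, ZMod.card, smul_eq_mul]
          _ = a * n2 := by ring
      have hbridge : 2 * a * n2 = 2 * (a * n2) := by ring
      have h2bad : 2 * bad.card < n2 := by omega
      have h4k : 4 * k ≤ 4 * k * n1 := by
        calc 4 * k = 4 * k * 1 := by ring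
          _ ≤ 4 * k * n1 := Nat.mul_le_mul_left _ hn1
      have hb1 : 1 ≤ b := by omega
      have hdc : d + c - 1 ≤ n2 := by omega
      have hP'fib : ∀ J' : ZMod n2, (P'.filter (fun q => q.2 = J')).card ≤ b := by
        intro J'
        -- find a full fiber of P far from J'
        set window := (Finset.univ : Finset (ZMod n2)).filter
          (fun J => ((arc d J') ∩ (arc c J)).Nonempty) with hwindow
        have hwincard : window.card ≤ c + d - 1 := by
          have := meets_card_le hd1 hc1 hdc J'
          rw [hwindow]
          omega
        set fulls := (Finset.univ : Finset (ZMod n2)).filter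
          (fun J => (P.filter (fun p => p.2 = J)).card = a) with hfulls
        have hcover : n2 ≤ fulls.card + bad.card := by
          have hsub : (Finset.univ : Finset (ZMod n2)) ⊆ fulls ∪ bad := by
            intro J _
            rcases Nat.lt_or_ge (P.filter (fun p => p.2 = J)).card a with h | h
            · exact Finset.mem_union_right _ (Finset.mem_filter.2 ⟨Finset.mem_univ _, by omega⟩)
            · have := hfc J
              exact Finset.mem_union_left _ (Finset.mem_filter.2 ⟨Finset.mem_univ _, by omega⟩)
          calc n2 = (Finset.univ : Finset (ZMod n2)).card := by rw [Finset.card_univ, ZMod.card]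
            _ ≤ (fulls ∪ bad).card := Finset.card_le_card hsub
            _ ≤ fulls.card + bad.card := Finset.card_union_le _ _
        have hgoodne : (fulls \ window).Nonempty := by
          rw [← Finset.card_pos]
          have := Finset.le_card_sdiff window fulls
          have hwin2 : 2 * (c + d - 1) < n2 := by omega
          omega
        obtain ⟨J, hJ⟩ := hgoodne
        rw [Finset.mem_sdiff] at hJ
        have hJfull : (P.filter (fun p => p.2 = J)).card = a := (Finset.mem_filter.1 hJ.1).2
        have hJfar : ¬ ((arc d J') ∩ (arc c J)).Nonempty := by
          intro h
          exact hJ.2 (Finset.mem_filter.2 ⟨Finset.mem_univ _, h⟩)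
        set T := (P.filter (fun p => p.2 = J)).image Prod.fst with hT
        have hTcard : T.card = a := by rw [hT, fiber_image_card]; exact hJfull
        have hTne : T.Nonempty := Finset.card_pos.1 (by omega)
        have hsub : (P'.filter (fun q => q.2 = J')).image Prod.fst ⊆
            Finset.univ.filter (fun v : ZMod n1 => ∀ u ∈ T, ((arc a u) ∩ (arc b v)).Nonempty) := by
          intro v hv
          rw [mem_fiber_image] at hv
          rw [Finset.mem_filter]
          refine ⟨Finset.mem_univ _, fun u hu => ?_⟩
          have huP : (u, J) ∈ P := mem_fiber_image.1 hu
          rcases hcross (u, J) huP (v, J') hv with h | h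
          · exact h
          · exact absurd (by rwa [Finset.inter_comm] at h) hJfar
        calc (P'.filter (fun q => q.2 = J')).card
            = ((P'.filter (fun q => q.2 = J')).image Prod.fst).card := (fiber_image_card P' J').symm
          _ ≤ _ := Finset.card_le_card hsub
          _ ≤ a + b - T.card := meets_all_card_le ha hb1 hsum T hTne
          _ = b := by rw [hTcard]; omega
      have hP'bd : P'.card ≤ b * n2 := by
        have hP'sum : P'.card = ∑ J' ∈ (Finset.univ : Finset (ZMod n2)),
            (P'.filter (fun q => q.2 = J')).card :=
          Finset.card_eq_sum_card_fiberwise (fun q _ => Finset.mem_univ q.2)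
        rw [hP'sum]
        calc ∑ J' ∈ (Finset.univ : Finset (ZMod n2)), (P'.filter (fun q => q.2 = J')).card
            ≤ ∑ _J' ∈ (Finset.univ : Finset (ZMod n2)), b :=
              Finset.sum_le_sum (fun J' _ => hP'fib J')
          _ = n2 * b := by rw [Finset.sum_const, Finset.card_univ, ZMod.card, smul_eq_mul]
          _ = b * n2 := by ring
      have hPbd : P.card ≤ a * n2 := by
        have := Finset.card_eq_sum_card_fiberwise
          (fun p hp => Finset.mem_univ (Prod.snd p) : ∀ p ∈ P, p.2 ∈ Finset.univ)
        rw [this]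
        calc ∑ J ∈ Finset.univ, (P.filter (fun p => p.2 = J)).card
            ≤ ∑ _J ∈ (Finset.univ : Finset (ZMod n2)), a := Finset.sum_le_sum (fun J _ => hfc J)
          _ = n2 * a := by rw [Finset.sum_const, Finset.card_univ, ZMod.card, smul_eq_mul]
          _ = a * n2 := by ring
      have hfin : E * P.card + E' * P'.card ≤ (a * E + b * E') * n2 := by
        calc E * P.card + E' * P'.card ≤ E * (a * n2) + E' * (b * n2) :=
              Nat.add_le_add (Nat.mul_le_mul_left E hPbd) (Nat.mul_le_mul_left E' hP'bd)
          _ = (a * E + b * E') * n2 := by ring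
      exact le_trans hfin (le_max_left _ _)

end PSM

section NL


/-- Single step: ratio between consecutive weighted layers is at least 3(j+1). -/
lemma nl_step (n1 n2 k j : ℕ) (hj1 : 1 ≤ j) (hjk : j + 2 ≤ k) (hjn1 : j + 1 ≤ n1)
    (hn1 : 1 ≤ n1) (hbig : 4 * k * n1 ≤ n2) :
    3 * (j+1) * (n1.choose (j+1) * n2.choose (k-j-1)) ≤ n1.choose j * n2.choose (k-j) := by
  have hkj : 0 < k - j := by omega
  have hI1 : n1.choose (j+1) * (j+1) = n1.choose j * (n1 - j) := Nat.choose_succ_right_eq n1 j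
  have hI2' : n2.choose (k-j-1+1) * ((k-j-1)+1) = n2.choose (k-j-1) * (n2 - (k-j-1)) :=
    Nat.choose_succ_right_eq n2 (k-j-1)
  have hkj1 : k - j - 1 + 1 = k - j := by omega
  rw [hkj1] at hI2'
  have h3 : 3 * ((n1 - j) * (k - j)) + (k - j - 1) ≤ n2 := by
    have hp : (n1 - j) * (k - j) ≤ n1 * k := Nat.mul_le_mul (Nat.sub_le _ _) (Nat.sub_le _ _)
    have e1 : 4 * k * n1 = 4 * (k * n1) := by ring
    have e2 : n1 * k = k * n1 := by ring
    have hk1 : k ≤ k * n1 := Nat.le_mul_of_pos_right k hn1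
    omega
  have key : (3 * (j+1) * (n1.choose (j+1) * n2.choose (k-j-1))) * (k - j) ≤
      (n1.choose j * n2.choose (k-j)) * (k - j) := by
    calc (3 * (j+1) * (n1.choose (j+1) * n2.choose (k-j-1))) * (k - j)
        = 3 * (n1.choose (j+1) * (j+1)) * n2.choose (k-j-1) * (k-j) := by ring
      _ = 3 * (n1.choose j * (n1 - j)) * n2.choose (k-j-1) * (k-j) := by rw [hI1]
      _ = (n1.choose j * n2.choose (k-j-1)) * (3 * ((n1-j) * (k-j))) := by ring
      _ ≤ (n1.choose j * n2.choose (k-j-1)) * (n2 - (k-j-1)) :=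
          Nat.mul_le_mul_left _ (by omega)
      _ = n1.choose j * (n2.choose (k-j-1) * (n2 - (k-j-1))) := by ring
      _ = n1.choose j * (n2.choose (k-j) * (k-j)) := by rw [← hI2']
      _ = (n1.choose j * n2.choose (k-j)) * (k-j) := by ring
  exact Nat.le_of_mul_le_mul_right key hkj

/-- Weighted monotonicity along the chain. -/
lemma nl_chain (n1 n2 k : ℕ) (hn1 : 1 ≤ n1) (hbig : 4 * k * n1 ≤ n2) :
    ∀ (j j' : ℕ), 1 ≤ j → j ≤ j' → j' + 1 ≤ k → j' ≤ n1 →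
    n1.choose j' * n2.choose (k-j') ≤ n1.choose j * n2.choose (k-j) := by
  intro j j' hj1 hjj' hj'k hj'n1
  induction j' with
  | zero => omega
  | succ m ih =>
    rcases Nat.eq_or_lt_of_le hjj' with heq | hlt
    · rw [heq]
    · have hjm : j ≤ m := by omega
      have hstep := nl_step n1 n2 k m (by omega) (by omega) (by omega) hn1 hbig
      have h1 : n1.choose (m+1) * n2.choose (k-(m+1)) ≤ n1.choose m * n2.choose (k-m) := by
        have : n1.choose (m+1) * n2.choose (k-m-1) ≤
            3 * (m+1) * (n1.choose (m+1) * n2.choose (k-m-1)) := by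
          have : 1 ≤ 3 * (m+1) := by omega
          calc n1.choose (m+1) * n2.choose (k-m-1)
              = 1 * (n1.choose (m+1) * n2.choose (k-m-1)) := by ring
            _ ≤ 3 * (m+1) * (n1.choose (m+1) * n2.choose (k-m-1)) :=
                Nat.mul_le_mul_right _ this
        have hkm : k - (m+1) = k - m - 1 := by omega
        rw [hkm]
        omega
      exact le_trans h1 (ih hjm (by omega) (by omega))

/-- The main numeric lemma: `2l · E_{l'} ≤ E_l`. -/
lemma nl_main (n1 n2 k l l' : ℕ) (hl1 : 1 ≤ l) (hll' : l < l') (hl'k : l' + 1 ≤ k)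
    (hl'n1 : l' ≤ n1) (hn1 : 1 ≤ n1) (hbig : 4 * k * n1 ≤ n2) :
    2 * l * (n1.choose l' * n2.choose (k-l')) ≤ n1.choose l * n2.choose (k-l) := by
  have hchain : n1.choose l' * n2.choose (k-l') ≤ n1.choose (l+1) * n2.choose (k-(l+1)) :=
    nl_chain n1 n2 k hn1 hbig (l+1) l' (by omega) (by omega) (by omega) (by omega)
  have hstep := nl_step n1 n2 k l hl1 (by omega) (by omega) hn1 hbig
  have hkl : k - l - 1 = k - (l+1) := by omega
  rw [hkl] at hstep
  calc 2 * l * (n1.choose l' * n2.choose (k-l'))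
      ≤ 2 * l * (n1.choose (l+1) * n2.choose (k-(l+1))) := Nat.mul_le_mul_left _ hchain
    _ ≤ 3 * (l+1) * (n1.choose (l+1) * n2.choose (k-(l+1))) :=
        Nat.mul_le_mul_right _ (by omega)
    _ ≤ n1.choose l * n2.choose (k-l) := hstep

end NL

section Count
variable {α : Type*} [DecidableEq α]

variable {α : Type*} [DecidableEq α]

/-- The space of injective labelings of `ZMod n` by elements of `X`. -/
def Omega (X : Finset α) (n : ℕ) [NeZero n] : Finset (ZMod n → α) :=
  (Fintype.piFinset fun _ : ZMod n => X).filter Function.Injective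

lemma mem_Omega {X : Finset α} {n : ℕ} [NeZero n] {f : ZMod n → α} :
    f ∈ Omega X n ↔ (∀ i, f i ∈ X) ∧ Function.Injective f := by
  simp [Omega, Fintype.mem_piFinset]

lemma Omega_nonempty (X : Finset α) (n : ℕ) [NeZero n] (hX : X.card = n) :
    (Omega X n).Nonempty := by
  have hcard : (Finset.univ : Finset (ZMod n)).card = X.card := by
    rw [Finset.card_univ, ZMod.card, hX]
  set e := Finset.equivOfCardEq hcard with he
  refine ⟨fun i => (e ⟨i, Finset.mem_univ i⟩ : α), ?_⟩
  rw [mem_Omega]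
  constructor
  · intro i
    exact (e ⟨i, Finset.mem_univ i⟩).2
  · intro i j hij
    have h1 : e ⟨i, Finset.mem_univ i⟩ = e ⟨j, Finset.mem_univ j⟩ := Subtype.ext hij
    have h2 := e.injective h1
    exact congrArg Subtype.val h2

/-- Count of pairs `(f, u)` whose `len`-arc image is `S`. -/
def NN (X : Finset α) (n : ℕ) [NeZero n] (len : ℕ) (S : Finset α) : ℕ :=
  ∑ f ∈ Omega X n, (Finset.univ.filter (fun u : ZMod n => (arc len u).image f = S)).card

lemma NN_partition (X : Finset α) (n len : ℕ) [NeZero n] (hlen : len ≤ n) :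
    ∑ S ∈ X.powersetCard len, NN X n len S = (Omega X n).card * n := by
  rw [show (∑ S ∈ X.powersetCard len, NN X n len S) =
    ∑ f ∈ Omega X n, ∑ S ∈ X.powersetCard len,
      (Finset.univ.filter (fun u : ZMod n => (arc len u).image f = S)).card from by
    rw [Finset.sum_comm]; rfl]
  rw [Finset.sum_congr rfl (fun f hf => ?_), Finset.sum_const, smul_eq_mul]
  have hmem : ∀ u : ZMod n, (arc len u).image f ∈ X.powersetCard len := by
    intro u
    rw [Finset.mem_powersetCard]
    rw [mem_Omega] at hf
    constructor
    · intro x hx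
      obtain ⟨i, _, hi⟩ := Finset.mem_image.1 hx
      exact hi ▸ hf.1 i
    · rw [Finset.card_image_of_injective _ hf.2, arc_card hlen]
  have := Finset.card_eq_sum_card_fiberwise
    (fun (u : ZMod n) (_ : u ∈ (Finset.univ : Finset (ZMod n))) => hmem u)
  rw [← this, Finset.card_univ, ZMod.card]

/-- Swap function carrying `S` to `S'` within `X`. -/
lemma exists_swap_fun (X S S' : Finset α) (hS : S ⊆ X) (hS' : S' ⊆ X)
    (hcard : S.card = S'.card) :
    ∃ g g' : α → α, (∀ x, g' (g x) = x) ∧ (∀ x, g (g' x) = x) ∧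
      (∀ x ∈ X, g x ∈ X) ∧ (∀ x ∈ X, g' x ∈ X) ∧ (S.image g = S') := by
  classical
  have hcard2 : (X \ S).card = (X \ S').card := by
    rw [Finset.card_sdiff_of_subset hS, Finset.card_sdiff_of_subset hS', hcard]
  set e1 := Finset.equivOfCardEq hcard with he1
  set e2 := Finset.equivOfCardEq hcard2 with he2
  set g : α → α := fun x =>
    if h : x ∈ S then (e1 ⟨x, h⟩ : α)
    else if h' : x ∈ X \ S then (e2 ⟨x, h'⟩ : α) else x with hg
  set g' : α → α := fun x =>
    if h : x ∈ S' then (e1.symm ⟨x, h⟩ : α)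
    else if h' : x ∈ X \ S' then (e2.symm ⟨x, h'⟩ : α) else x with hg'
  have hgS : ∀ x (h : x ∈ S), g x = (e1 ⟨x, h⟩ : α) := by
    intro x h; rw [hg]; simp [h]
  have hgX : ∀ x (h : x ∈ X \ S), g x = (e2 ⟨x, h⟩ : α) := by
    intro x h
    have hxS : x ∉ S := (Finset.mem_sdiff.1 h).2
    rw [hg]; simp [hxS, h]
  have hgout : ∀ x, x ∉ X → g x = x := by
    intro x hx
    have h1 : x ∉ S := fun h => hx (hS h)
    have h2 : x ∉ X \ S := fun h => hx (Finset.mem_sdiff.1 h).1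
    rw [hg]; simp [h1, h2]
  have hg'S : ∀ x (h : x ∈ S'), g' x = (e1.symm ⟨x, h⟩ : α) := by
    intro x h; rw [hg']; simp [h]
  have hg'X : ∀ x (h : x ∈ X \ S'), g' x = (e2.symm ⟨x, h⟩ : α) := by
    intro x h
    have hxS : x ∉ S' := (Finset.mem_sdiff.1 h).2
    rw [hg']; simp [hxS, h]
  have hg'out : ∀ x, x ∉ X → g' x = x := by
    intro x hx
    have h1 : x ∉ S' := fun h => hx (hS' h)
    have h2 : x ∉ X \ S' := fun h => hx (Finset.mem_sdiff.1 h).1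
    rw [hg']; simp [h1, h2]
  refine ⟨g, g', ?_, ?_, ?_, ?_, ?_⟩
  · -- g' ∘ g = id
    intro x
    by_cases h : x ∈ S
    · rw [hgS x h]
      have hmem : ((e1 ⟨x, h⟩ : α)) ∈ S' := (e1 ⟨x, h⟩).2
      rw [hg'S _ hmem]
      have : (⟨(e1 ⟨x, h⟩ : α), hmem⟩ : {y // y ∈ S'}) = e1 ⟨x, h⟩ := Subtype.ext rfl
      rw [this, Equiv.symm_apply_apply]
    · by_cases h' : x ∈ X \ S
      · rw [hgX x h']
        have hmem : ((e2 ⟨x, h'⟩ : α)) ∈ X \ S' := (e2 ⟨x, h'⟩).2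
        have hnotS' : ((e2 ⟨x, h'⟩ : α)) ∉ S' := (Finset.mem_sdiff.1 hmem).2
        rw [hg']
        simp only [hnotS', dif_neg, not_false_iff, hmem, dif_pos]
        have heta : (⟨(e2 ⟨x, h'⟩ : α), hmem⟩ : {y // y ∈ X \ S'}) = e2 ⟨x, h'⟩ := Subtype.ext rfl
        rw [heta, Equiv.symm_apply_apply]
      · have hx : x ∉ X := by
          intro hxX
          exact h' (Finset.mem_sdiff.2 ⟨hxX, h⟩)
        rw [hgout x hx, hg'out x hx]
  · -- g ∘ g' = id
    intro x
    by_cases h : x ∈ S'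
    · rw [hg'S x h]
      have hmem : ((e1.symm ⟨x, h⟩ : α)) ∈ S := (e1.symm ⟨x, h⟩).2
      rw [hgS _ hmem]
      have heta : (⟨(e1.symm ⟨x, h⟩ : α), hmem⟩ : {y // y ∈ S}) = e1.symm ⟨x, h⟩ := Subtype.ext rfl
      rw [heta, Equiv.apply_symm_apply]
    · by_cases h' : x ∈ X \ S'
      · rw [hg'X x h']
        have hmem : ((e2.symm ⟨x, h'⟩ : α)) ∈ X \ S := (e2.symm ⟨x, h'⟩).2
        have hnotS : ((e2.symm ⟨x, h'⟩ : α)) ∉ S := (Finset.mem_sdiff.1 hmem).2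
        rw [hg]
        simp only [hnotS, dif_neg, not_false_iff, hmem, dif_pos]
        have heta : (⟨(e2.symm ⟨x, h'⟩ : α), hmem⟩ : {y // y ∈ X \ S}) = e2.symm ⟨x, h'⟩ :=
          Subtype.ext rfl
        rw [heta, Equiv.apply_symm_apply]
      · have hx : x ∉ X := by
          intro hxX
          exact h' (Finset.mem_sdiff.2 ⟨hxX, h⟩)
        rw [hg'out x hx, hgout x hx]
  · -- maps X into X
    intro x hx
    by_cases h : x ∈ S
    · rw [hgS x h]; exact hS' (e1 ⟨x, h⟩).2
    · rw [hgX x (Finset.mem_sdiff.2 ⟨hx, h⟩)]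
      exact (Finset.mem_sdiff.1 (e2 ⟨x, Finset.mem_sdiff.2 ⟨hx, h⟩⟩).2).1
  · -- g' maps X into X
    intro x hx
    by_cases h : x ∈ S'
    · rw [hg'S x h]; exact hS (e1.symm ⟨x, h⟩).2
    · rw [hg'X x (Finset.mem_sdiff.2 ⟨hx, h⟩)]
      exact (Finset.mem_sdiff.1 (e2.symm ⟨x, Finset.mem_sdiff.2 ⟨hx, h⟩⟩).2).1
  · -- image
    apply Finset.ext
    intro y
    rw [Finset.mem_image]
    constructor
    · rintro ⟨x, hx, rfl⟩
      rw [hgS x hx]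
      exact (e1 ⟨x, hx⟩).2
    · intro hy
      refine ⟨(e1.symm ⟨y, hy⟩ : α), (e1.symm ⟨y, hy⟩).2, ?_⟩
      rw [hgS _ (e1.symm ⟨y, hy⟩).2]
      have : (⟨(e1.symm ⟨y, hy⟩ : α), (e1.symm ⟨y, hy⟩).2⟩ : {z // z ∈ S}) = e1.symm ⟨y, hy⟩ :=
        Subtype.ext rfl
      rw [this, Equiv.apply_symm_apply]

lemma NN_const (X : Finset α) (n len : ℕ) [NeZero n] {S S' : Finset α}
    (hS : S ∈ X.powersetCard len) (hS' : S' ∈ X.powersetCard len) :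
    NN X n len S = NN X n len S' := by
  obtain ⟨hSsub, hScard⟩ := Finset.mem_powersetCard.1 hS
  obtain ⟨hS'sub, hS'card⟩ := Finset.mem_powersetCard.1 hS'
  obtain ⟨g, g', hg'g, hgg', hgX, hg'X, himg⟩ :=
    exists_swap_fun X S S' hSsub hS'sub (hScard.trans hS'card.symm)
  have hginj : Function.Injective g := Function.LeftInverse.injective hg'g
  have hg'inj : Function.Injective g' := Function.LeftInverse.injective hgg'
  have hstep : ∀ f : ZMod n → α,
      (Finset.univ.filter (fun u : ZMod n => (arc len u).image f = S)).card =
      (Finset.univ.filter (fun u : ZMod n => (arc len u).image (g ∘ f) = S')).card := by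
    intro f
    congr 1
    apply Finset.filter_congr
    intro u _
    have himgcomp : (arc len u).image (g ∘ f) = ((arc len u).image f).image g := by
      rw [Finset.image_image]
    rw [himgcomp]
    constructor
    · intro h; rw [h, himg]
    · intro h
      apply Finset.image_injective hginj
      rw [h, himg]
  rw [NN, NN]
  rw [Finset.sum_congr rfl (fun f _ => hstep f)]
  apply Finset.sum_nbij' (fun f => g ∘ f) (fun f => g' ∘ f)
  · intro f hf
    rw [mem_Omega] at hf ⊢
    exact ⟨fun i => hgX _ (hf.1 i), hginj.comp hf.2⟩
  · intro f hf
    rw [mem_Omega] at hf ⊢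
    exact ⟨fun i => hg'X _ (hf.1 i), hg'inj.comp hf.2⟩
  · intro f _
    funext i
    exact hg'g (f i)
  · intro f _
    funext i
    exact hgg' (f i)
  · intro f _
    rfl


end Count

section Global

variable {α : Type*} [DecidableEq α]
variable {n1 n2 : ℕ} [NeZero n1] [NeZero n2]

/-- The member set determined by labelings and a pair of arc starts. -/
def memb (f : ZMod n1 → α) (g : ZMod n2 → α) (la mc : ℕ) (p : ZMod n1 × ZMod n2) : Finset α :=
  (arc la p.1).image f ∪ (arc mc p.2).image g

lemma memb_inter_left {X1 X2 : Finset α} (hdisj : Disjoint X1 X2)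
    {f : ZMod n1 → α} {g : ZMod n2 → α} (hf : ∀ i, f i ∈ X1) (hg : ∀ i, g i ∈ X2)
    (la mc : ℕ) (p : ZMod n1 × ZMod n2) :
    memb f g la mc p ∩ X1 = (arc la p.1).image f := by
  rw [memb, Finset.union_inter_distrib_right]
  have h1 : (arc la p.1).image f ∩ X1 = (arc la p.1).image f := by
    apply Finset.inter_eq_left.2
    intro x hx
    obtain ⟨i, _, hi⟩ := Finset.mem_image.1 hx
    exact hi ▸ hf i
  have h2 : (arc mc p.2).image g ∩ X1 = ∅ := by
    apply Finset.eq_empty_of_forall_notMem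
    intro x hx
    rw [Finset.mem_inter] at hx
    obtain ⟨i, _, hi⟩ := Finset.mem_image.1 hx.1
    exact Finset.disjoint_left.1 hdisj hx.2 (hi ▸ hg i)
  rw [h1, h2, Finset.union_empty]

lemma memb_inter_right {X1 X2 : Finset α} (hdisj : Disjoint X1 X2)
    {f : ZMod n1 → α} {g : ZMod n2 → α} (hf : ∀ i, f i ∈ X1) (hg : ∀ i, g i ∈ X2)
    (la mc : ℕ) (p : ZMod n1 × ZMod n2) :
    memb f g la mc p ∩ X2 = (arc mc p.2).image g := by
  rw [memb, Finset.union_inter_distrib_right]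
  have h1 : (arc mc p.2).image g ∩ X2 = (arc mc p.2).image g := by
    apply Finset.inter_eq_left.2
    intro x hx
    obtain ⟨i, _, hi⟩ := Finset.mem_image.1 hx
    exact hi ▸ hg i
  have h2 : (arc la p.1).image f ∩ X2 = ∅ := by
    apply Finset.eq_empty_of_forall_notMem
    intro x hx
    rw [Finset.mem_inter] at hx
    obtain ⟨i, _, hi⟩ := Finset.mem_image.1 hx.1
    exact Finset.disjoint_left.1 hdisj (hi ▸ hf i) hx.2
  rw [h1, h2, Finset.empty_union]

/-- Transfer of intersection from members to arcs. -/
lemma memb_transfer {X1 X2 : Finset α} (hdisj : Disjoint X1 X2)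
    {f : ZMod n1 → α} {g : ZMod n2 → α} (hf : ∀ i, f i ∈ X1) (hfinj : Function.Injective f)
    (hg : ∀ i, g i ∈ X2) (hginj : Function.Injective g)
    (la lb mc md : ℕ) (p q : ZMod n1 × ZMod n2)
    (h : ((memb f g la mc p) ∩ (memb f g lb md q)).Nonempty) :
    (arc la p.1 ∩ arc lb q.1).Nonempty ∨ (arc mc p.2 ∩ arc md q.2).Nonempty := by
  obtain ⟨x, hx⟩ := h
  rw [Finset.mem_inter, memb, memb, Finset.mem_union, Finset.mem_union] at hx
  obtain ⟨hx1, hx2⟩ := hx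
  rcases hx1 with h1 | h1 <;> rcases hx2 with h2 | h2
  · left
    obtain ⟨i, hi, hix⟩ := Finset.mem_image.1 h1
    obtain ⟨j, hj, hjx⟩ := Finset.mem_image.1 h2
    have : i = j := hfinj (hix.trans hjx.symm)
    exact ⟨i, Finset.mem_inter.2 ⟨hi, this ▸ hj⟩⟩
  · exfalso
    obtain ⟨i, _, hix⟩ := Finset.mem_image.1 h1
    obtain ⟨j, _, hjx⟩ := Finset.mem_image.1 h2
    exact Finset.disjoint_left.1 hdisj (hix ▸ hf i) (hjx ▸ hg j)
  · exfalso
    obtain ⟨i, _, hix⟩ := Finset.mem_image.1 h1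
    obtain ⟨j, _, hjx⟩ := Finset.mem_image.1 h2
    exact Finset.disjoint_left.1 hdisj (hjx ▸ hf j) (hix ▸ hg i)
  · right
    obtain ⟨i, hi, hix⟩ := Finset.mem_image.1 h1
    obtain ⟨j, hj, hjx⟩ := Finset.mem_image.1 h2
    have : i = j := hginj (hix.trans hjx.symm)
    exact ⟨i, Finset.mem_inter.2 ⟨hi, this ▸ hj⟩⟩

/-- Injectivity of `memb` in the pair of starts. -/
lemma memb_inj {X1 X2 : Finset α} (hdisj : Disjoint X1 X2)
    {f : ZMod n1 → α} {g : ZMod n2 → α} (hf : ∀ i, f i ∈ X1) (hfinj : Function.Injective f)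
    (hg : ∀ i, g i ∈ X2) (hginj : Function.Injective g)
    {la mc : ℕ} (hla1 : 1 ≤ la) (hlan : la < n1) (hmc1 : 1 ≤ mc) (hmcn : mc < n2)
    {p q : ZMod n1 × ZMod n2} (h : memb f g la mc p = memb f g la mc q) : p = q := by
  have h1 : (arc la p.1).image f = (arc la q.1).image f := by
    rw [← memb_inter_left hdisj hf hg la mc p, ← memb_inter_left hdisj hf hg la mc q, h]
  have h2 : (arc mc p.2).image g = (arc mc q.2).image g := by
    rw [← memb_inter_right hdisj hf hg la mc p, ← memb_inter_right hdisj hf hg la mc q, h]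
  have e1 : arc la p.1 = arc la q.1 := Finset.image_injective hfinj h1
  have e2 : arc mc p.2 = arc mc q.2 := Finset.image_injective hginj h2
  exact Prod.ext (arc_start_inj hla1 hlan e1) (arc_start_inj hmc1 hmcn e2)

end Global

section Summation

variable {α : Type*} [DecidableEq α]
variable {n1 n2 : ℕ} [NeZero n1] [NeZero n2]

lemma NN_mul (X : Finset α) (n len : ℕ) [NeZero n] (hX : X.card = n) (hlen : len ≤ n)
    {S : Finset α} (hS : S ∈ X.powersetCard len) :
    n.choose len * NN X n len S = (Omega X n).card * n := by
  have hpart := NN_partition X n len hlen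
  rw [Finset.sum_congr rfl (fun S' hS' => NN_const X n len hS' hS)] at hpart
  rw [Finset.sum_const, smul_eq_mul, Finset.card_powersetCard, hX] at hpart
  exact hpart

lemma Psig_card_eq (X1 X2 : Finset α) (hdisj : Disjoint X1 X2)
    (F : Finset (Finset α)) (la mc : ℕ)
    (hF : ∀ A ∈ F, A ⊆ X1 ∪ X2 ∧ (A ∩ X1).card = la ∧ (A ∩ X2).card = mc)
    {f : ZMod n1 → α} {g : ZMod n2 → α} (hf : f ∈ Omega X1 n1) (hg : g ∈ Omega X2 n2) :
    (Finset.univ.filter (fun p : ZMod n1 × ZMod n2 => memb f g la mc p ∈ F)).card =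
    ∑ A ∈ F, ((Finset.univ.filter (fun u : ZMod n1 => (arc la u).image f = A ∩ X1)).card *
              (Finset.univ.filter (fun v : ZMod n2 => (arc mc v).image g = A ∩ X2)).card) := by
  rw [mem_Omega] at hf hg
  set Ps := Finset.univ.filter (fun p : ZMod n1 × ZMod n2 => memb f g la mc p ∈ F) with hPs
  have hfib : Ps.card = ∑ A ∈ F, (Ps.filter (fun p => memb f g la mc p = A)).card :=
    Finset.card_eq_sum_card_fiberwise (fun p hp => (Finset.mem_filter.1 hp).2)
  rw [hfib]
  apply Finset.sum_congr rfl
  intro A hA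
  have hstep : Ps.filter (fun p => memb f g la mc p = A) =
      (Finset.univ.filter (fun u : ZMod n1 => (arc la u).image f = A ∩ X1)) ×ˢ
      (Finset.univ.filter (fun v : ZMod n2 => (arc mc v).image g = A ∩ X2)) := by
    apply Finset.ext
    intro p
    rw [Finset.mem_filter, hPs, Finset.mem_filter, Finset.mem_product,
      Finset.mem_filter, Finset.mem_filter]
    constructor
    · rintro ⟨⟨_, _⟩, heq⟩
      refine ⟨⟨Finset.mem_univ _, ?_⟩, ⟨Finset.mem_univ _, ?_⟩⟩
      · rw [← heq, ← memb_inter_left hdisj hf.1 hg.1 la mc p]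
      · rw [← heq, ← memb_inter_right hdisj hf.1 hg.1 la mc p]
    · rintro ⟨⟨_, h1⟩, ⟨_, h2⟩⟩
      have heq : memb f g la mc p = A := by
        rw [memb, h1, h2, ← Finset.inter_union_distrib_left]
        exact Finset.inter_eq_left.2 (hF A hA).1
      exact ⟨⟨Finset.mem_univ _, heq ▸ hA⟩, heq⟩
  rw [hstep, Finset.card_product]

lemma sum_Psig_card (X1 X2 : Finset α) (hdisj : Disjoint X1 X2)
    (hX1 : X1.card = n1) (hX2 : X2.card = n2)
    (F : Finset (Finset α)) (la mc : ℕ) (hla : la ≤ n1) (hmc : mc ≤ n2)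
    (hF : ∀ A ∈ F, A ⊆ X1 ∪ X2 ∧ (A ∩ X1).card = la ∧ (A ∩ X2).card = mc) :
    (n1.choose la * n2.choose mc) *
      (∑ fg ∈ (Omega X1 n1) ×ˢ (Omega X2 n2),
        (Finset.univ.filter (fun p : ZMod n1 × ZMod n2 => memb fg.1 fg.2 la mc p ∈ F)).card)
    = F.card * ((Omega X1 n1).card * n1 * ((Omega X2 n2).card * n2)) := by
  have hsum1 : (∑ fg ∈ (Omega X1 n1) ×ˢ (Omega X2 n2),
      (Finset.univ.filter (fun p : ZMod n1 × ZMod n2 => memb fg.1 fg.2 la mc p ∈ F)).card)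
      = ∑ A ∈ F, (NN X1 n1 la (A ∩ X1)) * (NN X2 n2 mc (A ∩ X2)) := by
    rw [Finset.sum_congr rfl (fun fg hfg => Psig_card_eq X1 X2 hdisj F la mc hF
      (Finset.mem_product.1 hfg).1 (Finset.mem_product.1 hfg).2)]
    rw [Finset.sum_product]
    calc ∑ f ∈ Omega X1 n1, ∑ g ∈ Omega X2 n2, ∑ A ∈ F,
          ((Finset.univ.filter (fun u : ZMod n1 => (arc la u).image f = A ∩ X1)).card *
           (Finset.univ.filter (fun v : ZMod n2 => (arc mc v).image g = A ∩ X2)).card)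
        = ∑ f ∈ Omega X1 n1, ∑ A ∈ F, ∑ g ∈ Omega X2 n2,
          ((Finset.univ.filter (fun u : ZMod n1 => (arc la u).image f = A ∩ X1)).card *
           (Finset.univ.filter (fun v : ZMod n2 => (arc mc v).image g = A ∩ X2)).card) := by
          exact Finset.sum_congr rfl (fun f _ => Finset.sum_comm)
      _ = ∑ f ∈ Omega X1 n1, ∑ A ∈ F,
          ((Finset.univ.filter (fun u : ZMod n1 => (arc la u).image f = A ∩ X1)).card *
            NN X2 n2 mc (A ∩ X2)) := by
          apply Finset.sum_congr rfl
          intro f _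
          apply Finset.sum_congr rfl
          intro A _
          simp only [NN]
          rw [Finset.mul_sum]
      _ = ∑ A ∈ F, ∑ f ∈ Omega X1 n1,
          ((Finset.univ.filter (fun u : ZMod n1 => (arc la u).image f = A ∩ X1)).card *
            NN X2 n2 mc (A ∩ X2)) := Finset.sum_comm
      _ = ∑ A ∈ F, (NN X1 n1 la (A ∩ X1)) * (NN X2 n2 mc (A ∩ X2)) := by
          apply Finset.sum_congr rfl
          intro A _
          simp only [NN]
          rw [Finset.sum_mul]
  rw [hsum1, Finset.mul_sum]
  have hperA : ∀ A ∈ F, (n1.choose la * n2.choose mc) *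
      ((NN X1 n1 la (A ∩ X1)) * (NN X2 n2 mc (A ∩ X2))) =
      (Omega X1 n1).card * n1 * ((Omega X2 n2).card * n2) := by
    intro A hA
    have h1 : A ∩ X1 ∈ X1.powersetCard la :=
      Finset.mem_powersetCard.2 ⟨Finset.inter_subset_right, (hF A hA).2.1⟩
    have h2 : A ∩ X2 ∈ X2.powersetCard mc :=
      Finset.mem_powersetCard.2 ⟨Finset.inter_subset_right, (hF A hA).2.2⟩
    have e1 := NN_mul X1 n1 la hX1 hla h1
    have e2 := NN_mul X2 n2 mc hX2 hmc h2
    calc (n1.choose la * n2.choose mc) * ((NN X1 n1 la (A ∩ X1)) * (NN X2 n2 mc (A ∩ X2)))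
        = (n1.choose la * NN X1 n1 la (A ∩ X1)) * (n2.choose mc * NN X2 n2 mc (A ∩ X2)) := by
          ring
      _ = ((Omega X1 n1).card * n1) * ((Omega X2 n2).card * n2) := by rw [e1, e2]
  rw [Finset.sum_congr rfl hperA, Finset.sum_const, smul_eq_mul]

end Summation

end Stmt4

open Stmt4

theorem stmt_4 {α : Type*} [DecidableEq α] (X1 X2 : Finset α) (n1 n2 k l l' s : ℕ)
    (hdisj : Disjoint X1 X2) (hn1 : X1.card = n1) (hn2 : X2.card = n2)
    (hl1 : 1 ≤ l) (hll' : l < l') (hl'k : l' ≤ k - 1)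
    (hbig : 4 * k * n1 ≤ n2) (hsum : l + l' ≤ n1)
    (F F' : Finset (Finset α))
    (hF : ∀ A ∈ F, A ⊆ X1 ∪ X2 ∧ A.card = k ∧
      (A ∩ X1).card = l ∧ (A ∩ X2).card = k - l)
    (hF' : ∀ A ∈ F', A ⊆ X1 ∪ X2 ∧ A.card = k ∧
      (A ∩ X1).card = l' ∧ (A ∩ X2).card = k - l')
    (hint : ∀ A ∈ F, ∀ B ∈ F, (A ∩ B).Nonempty)
    (hmatch : ∀ M ⊆ F', (M : Set (Finset α)).PairwiseDisjoint id → M.card ≤ s)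
    (hcross : ∀ A ∈ F, ∀ B ∈ F', (A ∩ B).Nonempty) :
    F.card + F'.card ≤
      max ((n1 - 1).choose (l - 1) * n2.choose (k - l) +
            (n1 - 1).choose (l' - 1) * n2.choose (k - l'))
        (2 * s * ((n1 - 1).choose (l' - 1) * n2.choose (k - l'))) := by
  classical
  have hl'2 : 2 ≤ l' := by omega
  have hl'k' : l' + 1 ≤ k := by omega
  have hn1pos : 1 ≤ n1 := by omega
  haveI : NeZero n1 := ⟨by omega⟩
  have h4k : 4 * k ≤ 4 * k * n1 := Nat.le_mul_of_pos_right _ (by omega)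
  have hn2pos : 1 ≤ n2 := by omega
  haveI : NeZero n2 := ⟨by omega⟩
  set m := k - l with hmdef
  set m' := k - l' with hm'def
  have hm1 : 1 ≤ m := by omega
  have hmk : m ≤ k := by omega
  have hm'1 : 1 ≤ m' := by omega
  have hm'k : m' ≤ k := by omega
  have hmn2 : m ≤ n2 := by omega
  have hm'n2' : m' < n2 := by omega
  set E := n1.choose l * n2.choose m with hEdef
  set E' := n1.choose l' * n2.choose m' with hE'def
  have hNL : 2 * l * E' ≤ E :=
    nl_main n1 n2 k l l' hl1 hll' hl'k' (by omega) hn1pos hbig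
  -- the per-order inequality
  have hper : ∀ fg ∈ (Omega X1 n1) ×ˢ (Omega X2 n2),
      E * (Finset.univ.filter (fun p : ZMod n1 × ZMod n2 => memb fg.1 fg.2 l m p ∈ F)).card +
      E' * (Finset.univ.filter (fun p : ZMod n1 × ZMod n2 => memb fg.1 fg.2 l' m' p ∈ F')).card ≤
      max ((l * E + l' * E') * n2) (2 * s * (l' * E') * n2) := by
    intro fg hfg
    obtain ⟨hf, hg⟩ := Finset.mem_product.1 hfg
    have hfm := mem_Omega.1 hf
    have hgm := mem_Omega.1 hg
    apply psm l l' m m' k s E E' hl1 hll' hsum hm1 hm'1 hmk hm'k (by omega) hn1pos hbig hNL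
    · -- intersecting
      intro p hp q hq
      rw [Finset.mem_filter] at hp hq
      exact memb_transfer hdisj hfm.1 hfm.2 hgm.1 hgm.2 l l m m p q (by
        have := hint _ hp.2 _ hq.2
        exact this)
    · -- cross-intersecting
      intro p hp q hq
      rw [Finset.mem_filter] at hp hq
      exact memb_transfer hdisj hfm.1 hfm.2 hgm.1 hgm.2 l l' m m' p q (by
        have := hcross _ hp.2 _ hq.2
        exact this)
    · -- matching number
      intro M hM hMfree
      set MM := M.image (fun p => memb fg.1 fg.2 l' m' p) with hMM
      have hl'n1 : l' < n1 := by omega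
      have hinj : Set.InjOn (fun p => memb fg.1 fg.2 l' m' p) M :=
        fun p _ q _ h =>
          memb_inj hdisj hfm.1 hfm.2 hgm.1 hgm.2 (by omega) hl'n1 hm'1 hm'n2' h
      have hcardMM : MM.card = M.card := Finset.card_image_of_injOn hinj
      have hsub : MM ⊆ F' := by
        intro A hA
        obtain ⟨p, hp, hpA⟩ := Finset.mem_image.1 hA
        have hmem := hM hp
        rw [Finset.mem_filter] at hmem
        exact hpA ▸ hmem.2
      have hpd : (MM : Set (Finset α)).PairwiseDisjoint id := by
        intro A hA B hB hAB
        obtain ⟨p, hp, hpA⟩ := Finset.mem_image.1 (Finset.mem_coe.1 hA)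
        obtain ⟨q, hq, hqB⟩ := Finset.mem_image.1 (Finset.mem_coe.1 hB)
        have hpq : p ≠ q := by
          rintro rfl
          exact hAB (hpA.symm.trans hqB)
        have hfree := hMfree p hp q hq hpq
        simp only [Function.onFun, id]
        rw [← hpA, ← hqB]
        by_contra hnd
        rw [Finset.not_disjoint_iff_nonempty_inter] at hnd
        exact hfree (memb_transfer hdisj hfm.1 hfm.2 hgm.1 hgm.2 l' l' m' m' p q hnd)
      have := hmatch MM hsub hpd
      omega
  -- sum the inequality over all labelings
  set W1 := (Omega X1 n1).card with hW1
  set W2 := (Omega X2 n2).card with hW2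
  have hW1pos : 0 < W1 := Finset.card_pos.2 (Omega_nonempty X1 n1 hn1)
  have hW2pos : 0 < W2 := Finset.card_pos.2 (Omega_nonempty X2 n2 hn2)
  set Mx := max ((l * E + l' * E') * n2) (2 * s * (l' * E') * n2) with hMx
  have hsummed : ∑ fg ∈ (Omega X1 n1) ×ˢ (Omega X2 n2),
      (E * (Finset.univ.filter (fun p : ZMod n1 × ZMod n2 => memb fg.1 fg.2 l m p ∈ F)).card +
       E' * (Finset.univ.filter (fun p : ZMod n1 × ZMod n2 => memb fg.1 fg.2 l' m' p ∈ F')).card)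
      ≤ (W1 * W2) * Mx := by
    calc _ ≤ ∑ _fg ∈ (Omega X1 n1) ×ˢ (Omega X2 n2), Mx := Finset.sum_le_sum hper
      _ = (W1 * W2) * Mx := by
        rw [Finset.sum_const, smul_eq_mul, Finset.card_product]
  have hFfmt : ∀ A ∈ F, A ⊆ X1 ∪ X2 ∧ (A ∩ X1).card = l ∧ (A ∩ X2).card = m :=
    fun A hA => ⟨(hF A hA).1, (hF A hA).2.2.1, (hF A hA).2.2.2⟩
  have hF'fmt : ∀ A ∈ F', A ⊆ X1 ∪ X2 ∧ (A ∩ X1).card = l' ∧ (A ∩ X2).card = m' :=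
    fun A hA => ⟨(hF' A hA).1, (hF' A hA).2.2.1, (hF' A hA).2.2.2⟩
  have hFsum := sum_Psig_card X1 X2 hdisj hn1 hn2 F l m (by omega) hmn2 hFfmt
  have hF'sum := sum_Psig_card X1 X2 hdisj hn1 hn2 F' l' m' (by omega) (by omega) hF'fmt
  have hLHS : ∑ fg ∈ (Omega X1 n1) ×ˢ (Omega X2 n2),
      (E * (Finset.univ.filter (fun p : ZMod n1 × ZMod n2 => memb fg.1 fg.2 l m p ∈ F)).card +
       E' * (Finset.univ.filter (fun p : ZMod n1 × ZMod n2 => memb fg.1 fg.2 l' m' p ∈ F')).card)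
      = (F.card + F'.card) * (W1 * n1 * (W2 * n2)) := by
    rw [Finset.sum_add_distrib, ← Finset.mul_sum, ← Finset.mul_sum]
    rw [hEdef, hE'def, hFsum, hF'sum]
    ring
  have hkey : (F.card + F'.card) * (n1 * n2) ≤ Mx := by
    have h1 : (W1 * W2) * ((F.card + F'.card) * (n1 * n2)) ≤ (W1 * W2) * Mx := by
      calc (W1 * W2) * ((F.card + F'.card) * (n1 * n2))
          = (F.card + F'.card) * (W1 * n1 * (W2 * n2)) := by ring
        _ ≤ (W1 * W2) * Mx := by rw [← hLHS]; exact hsummed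
    exact Nat.le_of_mul_le_mul_left h1 (Nat.mul_pos hW1pos hW2pos)
  -- translate the target
  have id1 : n1 * ((n1-1).choose (l-1)) = n1.choose l * l := by
    have h1 := Nat.add_one_mul_choose_eq (n1-1) (l-1)
    have e1 : n1 - 1 + 1 = n1 := by omega
    have e2 : l - 1 + 1 = l := by omega
    rw [e1, e2] at h1
    exact h1
  have id2 : n1 * ((n1-1).choose (l'-1)) = n1.choose l' * l' := by
    have h1 := Nat.add_one_mul_choose_eq (n1-1) (l'-1)
    have e1 : n1 - 1 + 1 = n1 := by omega
    have e2 : l' - 1 + 1 = l' := by omega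
    rw [e1, e2] at h1
    exact h1
  have hmaxmul : ∀ x y cc : ℕ, max x y * cc = max (x * cc) (y * cc) := by
    intro x y cc
    rcases le_total x y with h | h
    · rw [max_eq_right h, max_eq_right (Nat.mul_le_mul_right cc h)]
    · rw [max_eq_left h, max_eq_left (Nat.mul_le_mul_right cc h)]
  apply Nat.le_of_mul_le_mul_right _ (show 0 < n1 * n2 by positivity)
  rw [hmaxmul]
  have hB1 : ((n1 - 1).choose (l - 1) * n2.choose m +
      (n1 - 1).choose (l' - 1) * n2.choose m') * (n1 * n2) = (l * E + l' * E') * n2 := by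
    rw [hEdef, hE'def]
    calc ((n1 - 1).choose (l - 1) * n2.choose m +
        (n1 - 1).choose (l' - 1) * n2.choose m') * (n1 * n2)
        = (n1 * ((n1-1).choose (l-1))) * n2.choose m * n2 +
          (n1 * ((n1-1).choose (l'-1))) * n2.choose m' * n2 := by ring
      _ = (n1.choose l * l) * n2.choose m * n2 + (n1.choose l' * l') * n2.choose m' * n2 := by
          rw [id1, id2]
      _ = (l * (n1.choose l * n2.choose m) + l' * (n1.choose l' * n2.choose m')) * n2 := by ring
  have hB2 : (2 * s * ((n1 - 1).choose (l' - 1) * n2.choose m')) * (n1 * n2) =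
      2 * s * (l' * E') * n2 := by
    rw [hE'def]
    calc (2 * s * ((n1 - 1).choose (l' - 1) * n2.choose m')) * (n1 * n2)
        = 2 * s * ((n1 * ((n1-1).choose (l'-1))) * n2.choose m') * n2 := by ring
      _ = 2 * s * ((n1.choose l' * l') * n2.choose m') * n2 := by rw [id2]
      _ = 2 * s * (l' * (n1.choose l' * n2.choose m')) * n2 := by ring
  rw [hB1, hB2]
  exact hkey
end

section
/- Let q = sk + r with 1 ≤ r ≤ k-1, and let F be a family of k-subsets of {1,...,n} containing all k-subsets of {1,...,q} and having matching number at most s. For r+1 ≤ l' ≤ k-1, the subfamily F_{l'} = {F ∈ F : |F ∩ [q]| = l'} has matching number at most (k-r-1)/(k-l'). -/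
open Finset

/-!
Suppose a matching `M ⊆ F_{l'}` of size `m` had `m (k - l') ≥ k - r`. Its members cover only
`m l'` points of `[q]`, so the remaining `sk + r - m l' ≥ (s - m + 1) k` points of `[q]` carry
`s - m + 1` further disjoint `k`-sets, all in `F` because `F` contains every `k`-subset of `[q]`.
Together with `M` they form a matching of size `s + 1`.
-/

theorem Finset.exists_pairwiseDisjoint_subset_powersetCard_s6 {α : Type*} [DecidableEq α]
    {k : ℕ} (hk : 0 < k) (t : ℕ) {R : Finset α} (hR : t * k ≤ R.card) :
    ∃ N ⊆ R.powersetCard k, N.card = t ∧ (N : Set (Finset α)).PairwiseDisjoint id := by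
  induction t generalizing R with
  | zero => exact ⟨∅, empty_subset _, rfl, by simp⟩
  | succ t ih =>
    obtain ⟨S, hSR, hSk⟩ := exists_subset_card_eq (n := k) (le_trans (by nlinarith) hR)
    obtain ⟨N, hN, hNt, hNd⟩ := ih (R := R \ S) (by rw [card_sdiff_of_subset hSR, hSk]; lia)
    have hSN : ∀ B ∈ N, Disjoint S B := fun B hB =>
      disjoint_sdiff.mono_right (mem_powersetCard.mp (hN hB)).1
    have hSnotin : S ∉ N := fun hS =>
      (card_pos.mp (hSk ▸ hk)).ne_empty (disjoint_self.mp (hSN S hS))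
    refine ⟨insert S N, insert_subset (mem_powersetCard.mpr ⟨hSR, hSk⟩)
      (hN.trans (powersetCard_mono sdiff_subset)), by rw [card_insert_of_notMem hSnotin, hNt], ?_⟩
    rw [coe_insert]
    exact hNd.insert fun B hB _ => hSN B hB

theorem Finset.card_sdiff_biUnion_of_card_inter_eq {α : Type*} [DecidableEq α]
    {M : Finset (Finset α)} (hM : (M : Set (Finset α)).PairwiseDisjoint id) {Q : Finset α} {l : ℕ}
    (hMQ : ∀ A ∈ M, (Q ∩ A).card = l) :
    (Q \ M.biUnion id).card = Q.card - M.card * l := by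
  have hdisj : (M : Set (Finset α)).PairwiseDisjoint (Q ∩ ·) := fun A hA B hB hAB =>
    (hM hA hB hAB).mono inter_subset_right inter_subset_right
  rw [card_sdiff, inter_comm, inter_biUnion]
  simp only [id]
  rw [card_biUnion hdisj, sum_congr rfl hMQ, sum_const, smul_eq_mul]

theorem MatchingLE.card_add_le {F : Finset (Finset ℕ)} {s k : ℕ} (hF : MatchingLE F s)
    (hk : 0 < k) {Q : Finset ℕ} (hQ : Q.powersetCard k ⊆ F) {M : Finset (Finset ℕ)} (hMF : M ⊆ F)
    (hM : (M : Set (Finset ℕ)).PairwiseDisjoint id) {t : ℕ}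
    (ht : t * k ≤ (Q \ M.biUnion id).card) :
    M.card + t ≤ s := by
  obtain ⟨N, hN, hNt, hNd⟩ := exists_pairwiseDisjoint_subset_powersetCard_s6 hk t ht
  have hcross : ∀ A ∈ M, ∀ B ∈ N, Disjoint A B := fun A hA B hB =>
    disjoint_left.mpr fun x hxA hxB =>
      (mem_sdiff.mp ((mem_powersetCard.mp (hN hB)).1 hxB)).2 (mem_biUnion.mpr ⟨A, hA, hxA⟩)
  have hNF : N ⊆ F := hN.trans ((powersetCard_mono sdiff_subset).trans hQ)
  have hMN : Disjoint M N := disjoint_left.mpr fun A hA hAN => by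
    have hAk := (mem_powersetCard.mp (hN hAN)).2
    rw [disjoint_self.mp (hcross A hA A hAN), bot_eq_empty, card_empty] at hAk
    lia
  calc M.card + t = (M ∪ N).card := by rw [card_union_of_disjoint hMN, hNt]
    _ ≤ s := hF _ (union_subset hMF hNF) <| by
      rw [coe_union, Set.pairwiseDisjoint_union]
      exact ⟨hM, hNd, fun A hA B hB _ => hcross A hA B hB⟩

theorem stmt_6_general (k s r q l' : ℕ) (hq : q = s * k + r)
    (F : Finset (Finset ℕ))
    (hclq : (Finset.Icc 1 q).powersetCard k ⊆ F)
    (hmatch : MatchingLE F s) :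
    ∀ M ⊆ F.filter (fun A => (A ∩ Finset.Icc 1 q).card = l'),
      (M : Set (Finset ℕ)).PairwiseDisjoint id →
        M.card * (k - l') ≤ k - r - 1 := by
  intro M hM hMd
  by_contra! hlarge
  have hMF : M ⊆ F := hM.trans (filter_subset _ _)
  have hms : M.card ≤ s := hmatch M hMF hMd
  have hl'k : l' < k := by
    by_contra!
    simp [Nat.sub_eq_zero_of_le this] at hlarge
  have htrace : ∀ A ∈ M, (Icc 1 q ∩ A).card = l' := fun A hA => by
    rw [inter_comm]
    exact (mem_filter.mp (hM hA)).2
  have hcover : (Icc 1 q \ M.biUnion id).card = q - M.card * l' := by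
    rw [card_sdiff_biUnion_of_card_inter_eq hMd htrace, Nat.card_Icc, Nat.add_sub_cancel]
  have hroom : (s - M.card + 1) * k ≤ q - M.card * l' := by
    have hsplit_k : M.card * (k - l') + M.card * l' = M.card * k := by
      rw [← mul_add, Nat.sub_add_cancel hl'k.le]
    have hsplit_s : (s - M.card) * k + M.card * k = s * k := by
      rw [← add_mul, Nat.sub_add_cancel hms]
    rw [hq, add_one_mul]
    lia
  have hextend := hmatch.card_add_le (by lia) hclq hMF hMd (hcover ▸ hroom)
  lia

theorem stmt_6 (n k s r q l' : ℕ) (hq : q = s * k + r)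
    (hr1 : 1 ≤ r) (hr2 : r ≤ k - 1)
    (F : Finset (Finset ℕ)) (hF : F ⊆ (Finset.Icc 1 n).powersetCard k)
    (hclq : (Finset.Icc 1 q).powersetCard k ⊆ F)
    (hmatch : MatchingLE F s)
    (hl' : r + 1 ≤ l') (hl'k : l' ≤ k - 1) :
    ∀ M ⊆ F.filter (fun A => (A ∩ Finset.Icc 1 q).card = l'),
      (M : Set (Finset ℕ)).PairwiseDisjoint id →
        M.card * (k - l') ≤ k - r - 1 :=
  stmt_6_general k s r q l' hq F hclq hmatch
end

section
/- Let F be a shifted family of k-subsets of {1,...,n} with matching number at most s and clique number q = sk + k - l, where l < s/(3k) and (s+1)k ≤ n ≤ (s+1)k + s/(3k) - l. Then every F ∈ F satisfies |F ∩ {q+1,...,n}| ≤ min{k, l} - 1. -/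
/-!
Let `A ∈ F` and `t = |A ∩ (q, n]|`, and suppose `t ≥ min k l` and `t ≥ 1`. If `t = k`, then
`A` lies above `q`, so every `k`-subset of `[q + 1]` is shifted below `A` and `[q + 1]` is a
clique. If `t < k`, then `t ≥ l`, so `A` meets `[q]` in at most `k - l` points and `[q] \ A` has
at least `q - (k - l) = s k` points; these hold `s` disjoint `k`-sets, all in `F` because `[q]`
is a clique, and together with `A` they form a matching of size `s + 1`.
-/

open Finset

lemma shiftLE_of_forall_le_s11 {A B : Finset ℕ} (hcard : A.card = B.card)
    (hle : ∀ a ∈ A, ∀ b ∈ B, a ≤ b) : shiftLE A B := by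
  rw [shiftLE, List.forall₂_iff_get]
  refine ⟨by simp [hcard], fun i hA hB => hle _ ?_ _ ?_⟩
  · exact (mem_sort _).1 (List.get_mem _ _)
  · exact (mem_sort _).1 (List.get_mem _ _)

lemma sort_image_of_strictMonoOn {S : Finset ℕ} {f : ℕ → ℕ} (hf : StrictMonoOn f S) :
    (S.image f).sort (· ≤ ·) = (S.sort (· ≤ ·)).map f := by
  rw [sort, sort, image_val_of_injOn hf.injOn,
    Multiset.map_sort f S.val (· ≤ ·) (· ≤ ·) fun a ha b hb => (hf.le_iff_le ha hb).symm]

lemma shiftLE_image {S : Finset ℕ} {f : ℕ → ℕ} (hf : StrictMonoOn f S)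
    (hle : ∀ a ∈ S, a ≤ f a) : shiftLE S (S.image f) := by
  rw [shiftLE, sort_image_of_strictMonoOn hf, List.forall₂_map_right_iff, List.forall₂_same]
  exact fun a ha => hle a ((mem_sort _).1 ha)

lemma add_le_orderEmbOfFin {Q : Finset ℕ} {q c : ℕ} (hc : ∀ x ∈ Q, c ≤ x)
    (hQ : Q.card = q) (i : Fin q) : c + i ≤ Q.orderEmbOfFin hQ i := by
  set e := Q.orderEmbOfFin hQ
  have hsub : (Iic i).map e.toEmbedding ⊆ Icc c (e i) := by
    intro x hx
    obtain ⟨j, hj, rfl⟩ := mem_map.1 hx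
    exact mem_Icc.2 ⟨hc _ (Q.orderEmbOfFin_mem hQ j), e.monotone (mem_Iic.1 hj)⟩
  have := card_le_card hsub
  rw [card_map, Fin.card_Iic, Nat.card_Icc] at this
  omega

lemma IsShifted.mem_of_hasClique {n k q : ℕ} {F : Finset (Finset ℕ)} (hshift : IsShifted n F)
    (hclq : HasClique n F k q) {S : Finset ℕ} (hS : S ⊆ Icc 1 q) (hSk : S.card = k) :
    S ∈ F := by
  obtain ⟨Q, hQn, hQq, hQF⟩ := hclq
  have hqn : q ≤ n := by simpa [hQq] using card_le_card hQn
  -- `f` sends `j ∈ [q]` to the `j`-th smallest element of `Q`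
  let f : ℕ → ℕ := fun j => if h : j - 1 < q then Q.orderEmbOfFin hQq ⟨j - 1, h⟩ else 0
  have hf : ∀ j (hj : j ∈ Icc 1 q), f j = Q.orderEmbOfFin hQq ⟨j - 1, by grind⟩ := by
    intro j hj
    simp only [f, dif_pos (show j - 1 < q by grind)]
  have hf_mem : ∀ j ∈ Icc 1 q, f j ∈ Q := fun j hj => hf j hj ▸ Q.orderEmbOfFin_mem hQq _
  have hf_mono : StrictMonoOn f (Icc 1 q) := by
    intro a ha b hb hab
    rw [hf a ha, hf b hb, OrderEmbedding.lt_iff_lt, Fin.mk_lt_mk]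
    grind
  have hf_le : ∀ j ∈ Icc 1 q, j ≤ f j := by
    intro j hj
    have := add_le_orderEmbOfFin (fun x hx => (mem_Icc.1 (hQn hx)).1) hQq ⟨j - 1, by grind⟩
    grind
  have himage : S.image f ∈ F := by
    refine hQF (mem_powersetCard.2 ⟨fun x hx => ?_, ?_⟩)
    · obtain ⟨j, hj, rfl⟩ := mem_image.1 hx
      exact hf_mem j (hS hj)
    · rw [card_image_of_injOn ((hf_mono.mono hS).injOn), hSk]
  exact hshift _ himage S (hS.trans (Icc_subset_Icc_right hqn))
    (shiftLE_image (hf_mono.mono hS) fun j hj => hf_le j (hS hj))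

lemma IsShifted.hasClique_succ_of_subset_Icc {n k q : ℕ} {F : Finset (Finset ℕ)}
    (hshift : IsShifted n F) {A : Finset ℕ} (hA : A ∈ F) (hAk : A.card = k)
    (hAq : A ⊆ Icc (q + 1) n) (hAne : A.Nonempty) : HasClique n F k (q + 1) := by
  obtain ⟨a, ha⟩ := hAne
  have hqn : q + 1 ≤ n := (mem_Icc.1 (hAq ha)).1.trans (mem_Icc.1 (hAq ha)).2
  refine ⟨Icc 1 (q + 1), Icc_subset_Icc_right hqn, by simp, fun S hS => ?_⟩
  obtain ⟨hSq, hSk⟩ := mem_powersetCard.1 hS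
  exact hshift A hA S (hSq.trans (Icc_subset_Icc_right hqn)) <|
    shiftLE_of_forall_le_s11 (hSk.trans hAk.symm) fun x hx y hy =>
      (mem_Icc.1 (hSq hx)).2.trans (mem_Icc.1 (hAq hy)).1

lemma exists_pairwiseDisjoint_powersetCard {k s : ℕ} {C : Finset ℕ} (hk : 1 ≤ k)
    (hC : s * k ≤ C.card) :
    ∃ M ⊆ C.powersetCard k, M.card = s ∧ (M : Set (Finset ℕ)).PairwiseDisjoint id := by
  induction s generalizing C with
  | zero => exact ⟨∅, empty_subset _, rfl, by simp⟩
  | succ s ih =>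
    obtain ⟨X, hXC, hXk⟩ := exists_subset_card_eq (show k ≤ C.card by nlinarith)
    obtain ⟨M, hMC, hMs, hMdisj⟩ := ih (C := C \ X) (by rw [card_sdiff_of_subset hXC]; grind)
    have hdisj : ∀ Y ∈ M, Disjoint X Y := fun Y hY =>
      disjoint_of_subset_right (mem_powersetCard.1 (hMC hY)).1 disjoint_sdiff
    have hXne : X.Nonempty := card_pos.1 (by omega)
    have hXM : X ∉ M := fun hX => hXne.ne_empty (disjoint_self.1 (hdisj X hX))
    refine ⟨insert X M, ?_, by rw [card_insert_of_notMem hXM, hMs], ?_⟩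
    · exact insert_subset (mem_powersetCard.2 ⟨hXC, hXk⟩)
        (hMC.trans (powersetCard_mono sdiff_subset))
    · rw [coe_insert]
      exact hMdisj.insert fun Y hY _ => hdisj Y hY

lemma MatchingLE.card_lt_mul_of_disjoint {F : Finset (Finset ℕ)} {s k : ℕ}
    (hmatch : MatchingLE F s) (hk : 1 ≤ k)
    {C : Finset ℕ} (hC : ∀ X ⊆ C, X.card = k → X ∈ F) {A : Finset ℕ} (hA : A ∈ F)
    (hAne : A.Nonempty) (hAC : Disjoint A C) : C.card < s * k := by
  by_contra! hsk
  obtain ⟨M, hMC, hMs, hMdisj⟩ := exists_pairwiseDisjoint_powersetCard hk hsk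
  have hdisj : ∀ Y ∈ M, Disjoint A Y := fun Y hY =>
    disjoint_of_subset_right (mem_powersetCard.1 (hMC hY)).1 hAC
  have hAM : A ∉ M := fun h => hAne.ne_empty (disjoint_self.1 (hdisj A h))
  have hsub : insert A M ⊆ F := insert_subset hA fun Y hY =>
    hC Y (mem_powersetCard.1 (hMC hY)).1 (mem_powersetCard.1 (hMC hY)).2
  have := hmatch _ hsub (by rw [coe_insert]; exact hMdisj.insert fun Y hY _ => hdisj Y hY)
  rw [card_insert_of_notMem hAM] at this
  omega

theorem stmt_11_general (n k s l q : ℕ)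
    (hq : q = s * k + k - l)
    (F : Finset (Finset ℕ)) (hF : F ⊆ (Finset.Icc 1 n).powersetCard k)
    (hshift : IsShifted n F) (hmatch : MatchingLE F s)
    (hclq : HasClique n F k q) (hclq' : ¬ HasClique n F k (q + 1)) :
    ∀ A ∈ F, (A ∩ Finset.Icc (q + 1) n).card ≤ min k l - 1 := by
  intro A hA
  have hAk : A.card = k := (mem_powersetCard.1 (hF hA)).2
  by_contra! ht
  have htA : (A ∩ Icc (q + 1) n).card ≤ A.card := card_le_card inter_subset_left
  have hAne : A.Nonempty := card_pos.1 (by omega)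
  rcases htA.eq_or_lt with htA | htA
  · exact hclq' (hshift.hasClique_succ_of_subset_Icc hA hAk
      (inter_eq_left.1 (eq_of_subset_of_card_le inter_subset_left htA.ge)) hAne)
  · have hlow : (Icc 1 q ∩ A).card ≤ (A \ Icc (q + 1) n).card :=
      card_le_card fun x hx => by
        simp only [mem_inter, mem_sdiff, mem_Icc] at hx ⊢
        exact ⟨hx.2, by omega⟩
    have hsplit := card_sdiff_add_card_inter A (Icc (q + 1) n)
    have hcomp := card_sdiff_add_card_inter (Icc 1 q) A
    have hsmall := hmatch.card_lt_mul_of_disjoint (C := Icc 1 q \ A) (by omega)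
      (fun X hX hXk => hshift.mem_of_hasClique hclq (hX.trans sdiff_subset) hXk) hA hAne
      disjoint_sdiff
    simp only [Nat.card_Icc] at hcomp
    omega

theorem stmt_11 (n k s l q : ℕ) (hk : 1 ≤ k) (hs : 1 ≤ s)
    (hq : q = s * k + k - l)
    (hl : 3 * k * l < s)
    (hn1 : (s + 1) * k ≤ n) (hn2 : 3 * k * (n + l) ≤ 3 * k * ((s + 1) * k) + s)
    (F : Finset (Finset ℕ)) (hF : F ⊆ (Finset.Icc 1 n).powersetCard k)
    (hshift : IsShifted n F) (hmatch : MatchingLE F s)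
    (hclq : HasClique n F k q) (hclq' : ¬ HasClique n F k (q + 1)) :
    ∀ A ∈ F, (A ∩ Finset.Icc (q + 1) n).card ≤ min k l - 1 :=
  stmt_11_general n k s l q hq F hF hshift hmatch hclq hclq'
end

section
/- Let j+2 ≤ n, and consider families A_0 ⊆ binom({j+2,...,n}, k-1) and B_0 ⊆ binom({j+2,...,n}, l-j) that are cross-intersecting, with (k-1) + (l-j) ≤ n - j - 1. Then for any β > 0, |A_0| + β|B_0| ≤ max{ C(n-j-1, k-1), β·C(n-j-1, l-j) }. -/
/-!
Let `S = {j+2, …, n}`, `m = |S|`, `a = k-1`, `b = l-j`. Count the disjoint pairs `(A, B)` with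
`A ∈ A₀` and `B` a `b`-subset of `S` outside `B₀`: every `A` is disjoint from all `C(m-a, b)`
`b`-subsets of `S \ A`, none of which lies in `B₀`, while every `B` is disjoint from at most
`C(m-b, a)` sets of `A₀`. Since `C(m,a) C(m-a,b) = C(m,b) C(m-b,a)`, this says
`|A₀|/C(m,a) + |B₀|/C(m,b) ≤ 1`, and then `|A₀| + β|B₀|` combines `C(m,a)` and `β C(m,b)` with
nonnegative weights summing to at most one.
-/

open Finset

theorem Nat.choose_mul_choose_sub_comm (m a b : ℕ) :
    m.choose a * (m - a).choose b = m.choose b * (m - b).choose a := by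
  have ha := Nat.choose_mul (n := m) (Nat.le_add_right a b)
  have hb := Nat.choose_mul (n := m) (Nat.le_add_left b a)
  rw [Nat.add_sub_cancel_left] at ha
  rw [Nat.add_sub_cancel] at hb
  rw [← ha, ← hb, Nat.choose_symm_add]

section CrossIntersecting

variable {α : Type*} [DecidableEq α] {S : Finset α} {a b : ℕ} {𝒜 ℬ : Finset (Finset α)}

theorem card_mul_choose_le_card_sdiff_mul_choose (h𝒜 : 𝒜 ⊆ S.powersetCard a)
    (hcross : ∀ A ∈ 𝒜, ∀ B ∈ ℬ, (A ∩ B).Nonempty) :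
    #𝒜 * (#S - a).choose b ≤ #(S.powersetCard b \ ℬ) * (#S - b).choose a := by
  refine card_mul_le_card_mul (fun A B => Disjoint A B) (fun A hA => ?_) (fun B hB => ?_)
  · obtain ⟨hAS, hAcard⟩ := mem_powersetCard.1 (h𝒜 hA)
    have hsub : (S \ A).powersetCard b ⊆ (S.powersetCard b \ ℬ).bipartiteAbove Disjoint A := by
      intro B hB
      obtain ⟨hBS, hBcard⟩ := mem_powersetCard.1 hB
      have hdisj : Disjoint A B := (subset_sdiff.1 hBS).2.symm
      refine mem_filter.2 ⟨mem_sdiff.2 ⟨mem_powersetCard.2 ⟨hBS.trans sdiff_subset, hBcard⟩,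
        fun hBℬ => ?_⟩, hdisj⟩
      exact not_disjoint_iff_nonempty_inter.2 (hcross A hA B hBℬ) hdisj
    calc (#S - a).choose b = #((S \ A).powersetCard b) := by
          rw [card_powersetCard, card_sdiff_of_subset hAS, hAcard]
      _ ≤ _ := card_le_card hsub
  · obtain ⟨hBS, hBcard⟩ := mem_powersetCard.1 (mem_sdiff.1 hB).1
    have hsub : 𝒜.bipartiteBelow Disjoint B ⊆ (S \ B).powersetCard a := by
      intro A hA
      obtain ⟨hA𝒜, hdisj⟩ := mem_filter.1 hA
      obtain ⟨hAS, hAcard⟩ := mem_powersetCard.1 (h𝒜 hA𝒜)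
      exact mem_powersetCard.2 ⟨subset_sdiff.2 ⟨hAS, hdisj⟩, hAcard⟩
    calc #(𝒜.bipartiteBelow Disjoint B) ≤ #((S \ B).powersetCard a) := card_le_card hsub
      _ = (#S - b).choose a := by rw [card_powersetCard, card_sdiff_of_subset hBS, hBcard]

theorem card_mul_choose_add_card_mul_choose_le (hab : a + b ≤ #S)
    (h𝒜 : 𝒜 ⊆ S.powersetCard a) (hℬ : ℬ ⊆ S.powersetCard b)
    (hcross : ∀ A ∈ 𝒜, ∀ B ∈ ℬ, (A ∩ B).Nonempty) :
    #𝒜 * (#S).choose b + #ℬ * (#S).choose a ≤ (#S).choose a * (#S).choose b := by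
  have hcount := card_mul_choose_le_card_sdiff_mul_choose (b := b) h𝒜 hcross
  rw [card_sdiff_of_subset hℬ, card_powersetCard] at hcount
  have hℬle : #ℬ ≤ (#S).choose b := by
    simpa only [card_powersetCard] using card_le_card hℬ
  have hpos : 0 < (#S - b).choose a := Nat.choose_pos (by omega)
  have hscaled : #𝒜 * (#S).choose b ≤ (#S).choose a * ((#S).choose b - #ℬ) := by
    refine Nat.le_of_mul_le_mul_right ?_ hpos
    calc #𝒜 * (#S).choose b * (#S - b).choose a
        = (#S).choose a * (#𝒜 * (#S - a).choose b) := by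
          rw [mul_assoc, ← Nat.choose_mul_choose_sub_comm]; ring
      _ ≤ (#S).choose a * (((#S).choose b - #ℬ) * (#S - b).choose a) :=
          Nat.mul_le_mul_left _ hcount
      _ = (#S).choose a * ((#S).choose b - #ℬ) * (#S - b).choose a := by ring
  rw [Nat.mul_sub] at hscaled
  have : (#S).choose a * #ℬ ≤ (#S).choose a * (#S).choose b := Nat.mul_le_mul_left _ hℬle
  rw [mul_comm #ℬ]
  omega

end CrossIntersecting

theorem add_mul_le_max_of_mul_add_mul_le {x y X Y β : ℝ} (hx : 0 ≤ x) (hy : 0 ≤ y)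
    (hX : 0 < X) (hY : 0 < Y) (h : x * Y + y * X ≤ X * Y) :
    x + β * y ≤ max X (β * Y) := by
  set M := max X (β * Y)
  have hM : 0 ≤ M := hX.le.trans (le_max_left _ _)
  refine le_of_mul_le_mul_right ?_ (mul_pos hX hY)
  calc (x + β * y) * (X * Y) = X * (x * Y) + β * Y * (y * X) := by ring
    _ ≤ M * (x * Y) + M * (y * X) := by
        gcongr
        exacts [le_max_left _ _, le_max_right _ _]
    _ = M * (x * Y + y * X) := by ring
    _ ≤ M * (X * Y) := mul_le_mul_of_nonneg_left h hM

theorem stmt_13_general (n j k l : ℕ) (β : ℝ)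
    (hsum : (k - 1) + (l - j) ≤ n - j - 1)
    (A0 : Finset (Finset ℕ)) (hA0 : A0 ⊆ (Finset.Icc (j + 2) n).powersetCard (k - 1))
    (B0 : Finset (Finset ℕ)) (hB0 : B0 ⊆ (Finset.Icc (j + 2) n).powersetCard (l - j))
    (hcross : ∀ A ∈ A0, ∀ B ∈ B0, (A ∩ B).Nonempty) :
    (A0.card : ℝ) + β * B0.card ≤
      max ((n - j - 1).choose (k - 1) : ℝ) (β * ((n - j - 1).choose (l - j))) := by
  have hcard : #(Icc (j + 2) n) = n - j - 1 := by rw [Nat.card_Icc]; omega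
  have hcount := card_mul_choose_add_card_mul_choose_le (by omega) hA0 hB0 hcross
  rw [hcard] at hcount
  refine add_mul_le_max_of_mul_add_mul_le (Nat.cast_nonneg _) (Nat.cast_nonneg _)
    (Nat.cast_pos.2 (Nat.choose_pos (by omega))) (Nat.cast_pos.2 (Nat.choose_pos (by omega)))
    ?_
  exact_mod_cast hcount

theorem stmt_13 (n j k l : ℕ) (β : ℝ) (hβ : 0 < β) (hjn : j + 2 ≤ n)
    (hsum : (k - 1) + (l - j) ≤ n - j - 1)
    (A0 : Finset (Finset ℕ)) (hA0 : A0 ⊆ (Finset.Icc (j + 2) n).powersetCard (k - 1))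
    (B0 : Finset (Finset ℕ)) (hB0 : B0 ⊆ (Finset.Icc (j + 2) n).powersetCard (l - j))
    (hcross : ∀ A ∈ A0, ∀ B ∈ B0, (A ∩ B).Nonempty) :
    (A0.card : ℝ) + β * B0.card ≤
      max ((n - j - 1).choose (k - 1) : ℝ) (β * ((n - j - 1).choose (l - j))) :=
  stmt_13_general n j k l β hsum A0 hA0 B0 hB0 hcross
end
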